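/- arXiv:1401.0173 — 4 statements merged into one kernel-verified Lean document; each statement's English description precedes it below -/
import Mathlib

section
/- Let p be a prime and let μ ≤ λ be partitions with at most n parts such that w(μ,λ) = w for a Dyck word w of length 2n with parameters r, L_0,…,L_r, M_0,…,M_r. Then for every i ∈ {1,…,r−1}: ∏_{k=λ_{L_i+1}+1}^{μ_{M_{i−1}+1}} p^{μ'_k(λ'_k−μ'_k)} · binom(λ'_k−μ'_{k+1}, λ'_k−μ'_k)_{p^{-1}} = (∏_{j=1}^{M_i−M_{i−1}} p^{(M_{i−1}+j)(L_i−M_{i−1}−j)·r_{M_{i−1}+j}}) · binom(M_i−M_{i−1}, J_i^μ)_{p^{-1}} · binom(L_i−M_{i−1}, L_i−M_i)_{p^{-1}}. -/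
noncomputable section

/-- The Gaussian binomial coefficient `binom(a,b)_Y`, as an element of a field,
evaluated at `Y`. -/
def gaussBinom {K : Type*} [Field K] (Y : K) (a b : ℕ) : K :=
  (∏ i ∈ Finset.Icc (a - b + 1) a, (1 - Y ^ i)) / ∏ i ∈ Finset.Icc 1 b, (1 - Y ^ i)

def gaussMultinomAux {K : Type*} [Field K] (Y : K) : ℕ → List ℕ → K
  | _, [] => 1
  | n, i :: is => gaussBinom Y n i * gaussMultinomAux Y i is

/-- The Gaussian multinomial coefficient `binom(n, I)_Y`:
for `I = {i₁ < ⋯ < iₘ}`, this is `binom(n,iₘ)_Y · binom(iₘ,i_{m-1})_Y ⋯ binom(i₂,i₁)_Y`. -/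
def gaussMultinom {K : Type*} [Field K] (Y : K) (n : ℕ) (I : Finset ℕ) : K :=
  gaussMultinomAux Y n ((I.sort (· ≤ ·)).reverse)

def multinomAux : ℕ → List ℕ → ℕ
  | _, [] => 1
  | n, i :: is => n.choose i * multinomAux i is

/-- The ordinary multinomial coefficient `binom(n, I)`, the value of `binom(n,I)_Y` at `Y = 1`. -/
def multinom (n : ℕ) (I : Finset ℕ) : ℕ :=
  multinomAux n ((I.sort (· ≤ ·)).reverse)

/-- The Igusa function `I_h(Y; X_1, …, X_h)`. -/
def igusa {K : Type*} [Field K] (h : ℕ) (Y : K) (X : ℕ → K) : K :=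
  (1 - X h)⁻¹ * ∑ I ∈ (Finset.Icc 1 (h - 1)).powerset,
    gaussMultinom Y h I * ∏ i ∈ I, X i / (1 - X i)

/-- The Igusa function `I_h^∘(Y; X_1, …, X_h)`. -/
def igusaCirc {K : Type*} [Field K] (h : ℕ) (Y : K) (X : ℕ → K) : K :=
  X h * igusa h Y X

/-- The Igusa function at `Y = 1`, `I_h(1; X_1, …, X_h)`, with ordinary multinomials. -/
def igusaOne {K : Type*} [Field K] (h : ℕ) (X : ℕ → K) : K :=
  (1 - X h)⁻¹ * ∑ I ∈ (Finset.Icc 1 (h - 1)).powerset,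
    (multinom h I : K) * ∏ i ∈ I, X i / (1 - X i)

/-- The chains (of arbitrary finite length, including the empty chain) of nonempty proper
subsets of `{1, …, h}`, encoded as finsets of subsets that are totally ordered by inclusion. -/
def chainsOn (h : ℕ) : Finset (Finset (Finset ℕ)) :=
  ((Finset.Icc 1 h).powerset.filter
      (fun I => I ≠ ∅ ∧ I ≠ Finset.Icc 1 h)).powerset.filter
    (fun C => ∀ I ∈ C, ∀ J ∈ C, I ⊆ J ∨ J ⊆ I)

/-- The generalized Igusa function `I^wo_h((X_𝓘)_𝓘)`, with variables indexed by the
nonempty subsets of `{1, …, h}`. -/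
def igusaWO {K : Type*} [Field K] (h : ℕ) (X : Finset ℕ → K) : K :=
  (1 - X (Finset.Icc 1 h))⁻¹ * ∑ C ∈ chainsOn h, ∏ I ∈ C, X I / (1 - X I)

/-- The Igusa function `I_h(Y; X_1, …, X_h)` with power series arguments. -/
def igusaPS (h : ℕ) (Y : ℚ) (X : ℕ → PowerSeries ℚ) : PowerSeries ℚ :=
  (1 - X h)⁻¹ * ∑ I ∈ (Finset.Icc 1 (h - 1)).powerset,
    PowerSeries.C (gaussMultinom Y h I) * ∏ i ∈ I, X i * (1 - X i)⁻¹

/-- The Igusa function `I_h^∘(Y; X_1, …, X_h)` with power series arguments. -/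
def igusaCircPS (h : ℕ) (Y : ℚ) (X : ℕ → PowerSeries ℚ) : PowerSeries ℚ :=
  X h * igusaPS h Y X

/-- The Igusa function `I_h(1; X_1, …, X_h)` with power series arguments. -/
def igusaOnePS (h : ℕ) (X : ℕ → PowerSeries ℚ) : PowerSeries ℚ :=
  (1 - X h)⁻¹ * ∑ I ∈ (Finset.Icc 1 (h - 1)).powerset,
    (multinom h I : PowerSeries ℚ) * ∏ i ∈ I, X i * (1 - X i)⁻¹

/-- The generalized Igusa function `I^wo_h` with power series arguments. -/
def igusaWOPS (h : ℕ) (X : Finset ℕ → PowerSeries ℚ) : PowerSeries ℚ :=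
  (1 - X (Finset.Icc 1 h))⁻¹ * ∑ C ∈ chainsOn h, ∏ I ∈ C, X I * (1 - X I)⁻¹

/-- `lam` encodes a partition `λ_1 ≥ ⋯ ≥ λ_n ≥ 0` with at most `n` parts
(indexed from `1`; the irrelevant values `lam 0` and `lam j` for `j > n` are zero). -/
def IsPartition (n : ℕ) (lam : ℕ → ℕ) : Prop :=
  (∀ j, 1 ≤ j → lam (j + 1) ≤ lam j) ∧ ∀ j, j = 0 ∨ n < j → lam j = 0

/-- `ℓ` encodes an `n`-tuple of non-negative integers, indexed from `1`
(the irrelevant values at `0` and beyond `n` are zero). -/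
def IsTuple (n : ℕ) (ℓ : ℕ → ℕ) : Prop :=
  ∀ j, j = 0 ∨ n < j → ℓ j = 0

/-- The dual partition: `λ'_k = #{j ∈ {1,…,n} : λ_j ≥ k}`. -/
def dualPart (n : ℕ) (lam : ℕ → ℕ) (k : ℕ) : ℕ :=
  ((Finset.Icc 1 n).filter fun j => k ≤ lam j).card

/-- `α(λ, μ; p)`: the number of subgroups of `⊕_{k=1}^n ℤ/p^{λ_k}ℤ` that are isomorphic
to `⊕_{k=1}^n ℤ/p^{μ_k}ℤ`. -/
def alphaCount (p n : ℕ) (lam mu : ℕ → ℕ) : ℕ :=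
  Nat.card {H : AddSubgroup ((j : Fin n) → ZMod (p ^ lam (j.1 + 1))) //
    Nonempty (H ≃+ ((j : Fin n) → ZMod (p ^ mu (j.1 + 1))))}

/-- `β(λ)`: the number of `n`-tuples `ℓ ∈ ℕ₀ⁿ` whose non-increasing rearrangement is `λ`. -/
def betaCount (n : ℕ) (lam : ℕ → ℕ) : ℕ :=
  Nat.card {ℓ : Fin n → ℕ // ∃ σ : Equiv.Perm (Fin n), ∀ j, ℓ (σ j) = lam (j.1 + 1)}

/-- `(r, L, M)` are the parameters of a Dyck word of length `2n`:
`w = 0^{L_1}1^{M_1}0^{L_2-L_1}1^{M_2-M_1}⋯0^{L_r-L_{r-1}}1^{M_r-M_{r-1}}`. -/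
def DyckParams (n r : ℕ) (L M : ℕ → ℕ) : Prop :=
  1 ≤ r ∧ L 0 = 0 ∧ M 0 = 0 ∧ L r = n ∧ M r = n ∧
    ∀ i ∈ Finset.Icc 1 r, L (i - 1) < L i ∧ M (i - 1) < M i ∧ M i ≤ L i

/-- `w(μ, λ) = w` for the Dyck word `w` with parameters `(r, L, M)`:
`λ_{L_i} ≥ μ_{M_{i-1}+1}` for `i ∈ {1,…,r}` and `μ_{M_i} > λ_{L_i+1}` for `i ∈ {1,…,r-1}`. -/
def WMatch (r : ℕ) (L M : ℕ → ℕ) (mu lam : ℕ → ℕ) : Prop :=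
  (∀ i ∈ Finset.Icc 1 r, mu (M (i - 1) + 1) ≤ lam (L i)) ∧
    ∀ i ∈ Finset.Icc 1 (r - 1), lam (L i + 1) < mu (M i)

/-- `t_i = |𝒜_1| + ⋯ + |𝒜_i|` for an ordered set partition `𝒜`. -/
def tpar (𝒜 : ℕ → Finset ℕ) (i : ℕ) : ℕ :=
  ∑ k ∈ Finset.Icc 1 i, (𝒜 k).card

/-- The `j`-th smallest element of a finite set of naturals (`j` counted from `1`). -/
def sortedElt (A : Finset ℕ) (j : ℕ) : ℕ :=
  (A.sort (· ≤ ·)).getD (j - 1) 0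

/-- `ε^{(i)}(𝓘) = L_{i-1} + ∑_{j ∈ 𝓘} f_{a^{(i)}_j}`, where `a^{(i)}_1 < ⋯` are the
elements of `𝒜_i`. -/
def epsA (f L : ℕ → ℕ) (𝒜 : ℕ → Finset ℕ) (i : ℕ) (I : Finset ℕ) : ℕ :=
  L (i - 1) + ∑ j ∈ I, f (sortedElt (𝒜 i) j)

/-- The number of ideals of additive index `m` in the Heisenberg Lie ring `L(R) = R⊕R⊕R`
with bracket `[(a,b,c),(a',b',c')] = (0,0,ab'-a'b)`. -/
def heisenbergIdealCount (R : Type*) [CommRing R] (m : ℕ) : ℕ :=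
  Nat.card {I : AddSubgroup (R × R × R) //
    (∀ x ∈ I, ∀ y : R × R × R, (0, 0, y.1 * x.2.1 - x.1 * y.2.1) ∈ I) ∧ I.index = m}

/-- The explicit rational function `E^f_{w,𝒜}(X,Y)` attached to a Dyck word with parameters
`(r, L, M)` and a compatible ordered set partition `𝒜` of `{1,…,g}`. -/
def Efun {F : Type*} [Field F] (n r : ℕ) (f L M : ℕ → ℕ) (𝒜 : ℕ → Finset ℕ)
    (Xv Yv : F) : F :=
  (∏ i ∈ Finset.Icc 1 r, gaussBinom Xv⁻¹ (L i - M (i - 1)) (L i - M i)) *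
    (∏ i ∈ Finset.Icc 1 r, igusaWO (tpar 𝒜 i - tpar 𝒜 (i - 1))
      (fun I => Xv ^ ((2 * n - M (i - 1) + epsA f L 𝒜 i I) * M (i - 1)) *
        Yv ^ (2 * epsA f L 𝒜 i I + M (i - 1)))) *
    (∏ i ∈ Finset.Icc 1 (r - 1), igusaCirc (M i - M (i - 1)) Xv⁻¹
      (fun j => Xv ^ ((M (i - 1) + j) * (2 * n + L i - (M (i - 1) + j))) *
        Yv ^ (2 * L i + M (i - 1) + j))) *
    igusa (n - M (r - 1)) Xv⁻¹
      (fun j => Xv ^ ((M (r - 1) + j) * (2 * n + L r - (M (r - 1) + j))) *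
        Yv ^ (2 * L r + M (r - 1) + j))

/-- The power series `E^f_{w,𝒜}(p,t)`, the explicit rational function `E^f_{w,𝒜}`
evaluated at `X = p`, `Y = t` and expanded as a power series in `t`. -/
def EfunPS (p n r : ℕ) (f L M : ℕ → ℕ) (𝒜 : ℕ → Finset ℕ) : PowerSeries ℚ :=
  (∏ i ∈ Finset.Icc 1 r,
      PowerSeries.C (gaussBinom ((p : ℚ)⁻¹) (L i - M (i - 1)) (L i - M i))) *
    (∏ i ∈ Finset.Icc 1 r, igusaWOPS (tpar 𝒜 i - tpar 𝒜 (i - 1))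
      (fun I => PowerSeries.C ((p : ℚ) ^ ((2 * n - M (i - 1) + epsA f L 𝒜 i I) * M (i - 1))) *
        PowerSeries.X ^ (2 * epsA f L 𝒜 i I + M (i - 1)))) *
    (∏ i ∈ Finset.Icc 1 (r - 1), igusaCircPS (M i - M (i - 1)) ((p : ℚ)⁻¹)
      (fun j => PowerSeries.C ((p : ℚ) ^ ((M (i - 1) + j) * (2 * n + L i - (M (i - 1) + j)))) *
        PowerSeries.X ^ (2 * L i + M (i - 1) + j))) *
    igusaPS (n - M (r - 1)) ((p : ℚ)⁻¹)
      (fun j => PowerSeries.C ((p : ℚ) ^ ((M (r - 1) + j) * (2 * n + L r - (M (r - 1) + j)))) *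
        PowerSeries.X ^ (2 * L r + M (r - 1) + j))

/-- The set of canonical representatives `(r, L, M, 𝒜)` of all pairs consisting of
a Dyck word `w` of length `2n` and an ordered set partition `𝒜` of `{1,…,g}`
compatible with `w`. -/
def dyckPartData (g n : ℕ) (f : ℕ → ℕ) : Set (ℕ × (ℕ → ℕ) × (ℕ → ℕ) × (ℕ → Finset ℕ)) :=
  {d | DyckParams n d.1 d.2.1 d.2.2.1 ∧
    (∀ j, d.1 < j → d.2.1 j = n ∧ d.2.2.1 j = n) ∧
    (∀ i ∈ Finset.Icc 1 d.1, (d.2.2.2 i).Nonempty) ∧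
    (∀ i ∈ Finset.Icc 1 d.1, ∀ j ∈ Finset.Icc 1 d.1, i ≠ j → Disjoint (d.2.2.2 i) (d.2.2.2 j)) ∧
    (Finset.Icc 1 d.1).biUnion d.2.2.2 = Finset.Icc 1 g ∧
    (∀ i ∈ Finset.Icc 1 d.1, ∑ j ∈ d.2.2.2 i, f j = d.2.1 i - d.2.1 (i - 1)) ∧
    (∀ j, j = 0 ∨ d.1 < j → d.2.2.2 j = ∅)}

/-- The explicit rational function `W^f(X,Y)` expressing the local normal zeta function of
the Heisenberg group at an unramified prime with residue degrees `f_1, …, f_g`. -/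
def Wfun {F : Type*} [Field F] (g n : ℕ) (f : ℕ → ℕ) (Xv Yv : F) : F :=
  (∏ i ∈ Finset.Icc 1 g, (1 - Yv ^ (2 * f i))) *
    (∏ i ∈ Finset.range (2 * n), (1 - Xv ^ i * Yv)⁻¹) *
    ∑ᶠ d ∈ dyckPartData g n f, Efun n d.1 f d.2.1 d.2.2.1 d.2.2.2 Xv Yv
end

open Finset in
/-- The q-factorial. -/
def qfac (Y : ℚ) (t : ℕ) : ℚ := ∏ i ∈ Finset.Icc 1 t, (1 - Y ^ i)

lemma qfac_zero (Y : ℚ) : qfac Y 0 = 1 := by simp [qfac]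

lemma qfac_ne_zero (p : ℕ) (hp : 2 ≤ p) (t : ℕ) : qfac ((p : ℚ)⁻¹) t ≠ 0 := by
  refine Finset.prod_ne_zero_iff.2 fun i hi => ?_
  have hi1 : 1 ≤ i := (Finset.mem_Icc.1 hi).1
  have hp1 : (1 : ℚ) < (p : ℚ) := by exact_mod_cast hp.trans_lt' one_lt_two
  have h0 : (0 : ℚ) ≤ (p : ℚ)⁻¹ := by positivity
  have h1 : ((p : ℚ)⁻¹) < 1 := by
    rw [inv_lt_one_iff₀]; right; exact hp1
  have : ((p : ℚ)⁻¹) ^ i < 1 := pow_lt_one₀ h0 h1 (by omega)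
  intro h
  have : ((p : ℚ)⁻¹) ^ i = 1 := by linarith [sub_eq_zero.1 h]
  linarith

lemma qfac_mul (Y : ℚ) {c a : ℕ} (h : c ≤ a) :
    qfac Y c * ∏ i ∈ Finset.Icc (c + 1) a, (1 - Y ^ i) = qfac Y a := by
  rw [qfac, qfac, ← Finset.prod_union]
  · congr 1
    ext x; simp only [Finset.mem_union, Finset.mem_Icc]; omega
  · rw [Finset.disjoint_left]; intro x hx hx'
    simp only [Finset.mem_Icc] at hx hx'; omega

lemma gaussBinom_eq (Y : ℚ) (h0 : ∀ t, qfac Y t ≠ 0) {A B : ℕ} (h : B ≤ A) :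
    gaussBinom Y A B = qfac Y A / (qfac Y (A - B) * qfac Y B) := by
  have h1 := qfac_mul Y (Nat.sub_le A B)
  have h2 : (∏ i ∈ Finset.Icc (A - B + 1) A, (1 - Y ^ i)) = qfac Y A / qfac Y (A - B) := by
    rw [eq_div_iff (h0 _)]
    rw [mul_comm]; exact h1
  rw [gaussBinom, show (∏ i ∈ Finset.Icc 1 B, (1 - Y ^ i)) = qfac Y B from rfl, h2,
    div_div]

lemma qfac_telescope (f : ℕ → ℚ) (hf : ∀ k, f k ≠ 0) (A : ℕ) :
    ∀ B, A ≤ B + 1 → ∏ k ∈ Finset.Icc A B, (f (k + 1) * (f k)⁻¹) = f (B + 1) * (f A)⁻¹ := by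
  intro B
  induction B with
  | zero =>
    intro hA
    interval_cases A
    · simp
    · rw [show Finset.Icc 1 0 = ∅ by rfl, Finset.prod_empty]
      exact (mul_inv_cancel₀ (hf 1)).symm
  | succ B ih =>
    intro hA
    rcases Nat.lt_or_ge B (A) with hB | hB
    · rcases Nat.eq_or_lt_of_le hA with h | h
      · rw [show Finset.Icc A (B + 1) = ∅ from Finset.Icc_eq_empty_of_lt (by omega),
          Finset.prod_empty, ← h]
        exact (mul_inv_cancel₀ (hf A)).symm
      · have hAB : A = B + 1 := by omega
        subst hAB
        rw [Finset.Icc_self, Finset.prod_singleton]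
    · rw [Finset.prod_Icc_succ_top (by omega), ih (by omega)]
      calc f (B + 1) * (f A)⁻¹ * (f (B + 1 + 1) * (f (B + 1))⁻¹)
          = f (B + 1) * (f (B + 1))⁻¹ * (f (B + 1 + 1) * (f A)⁻¹) := by ring
        _ = f (B + 1 + 1) * (f A)⁻¹ := by rw [mul_inv_cancel₀ (hf _), one_mul]

lemma finset_downset {m : ℕ} {T : Finset ℕ} (hT : T ⊆ Finset.Icc 1 m)
    (hdown : ∀ j ∈ T, ∀ j', 1 ≤ j' → j' ≤ j → j' ∈ T) : T = Finset.Icc 1 T.card := by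
  ext x
  simp only [Finset.mem_Icc]
  constructor
  · intro hx
    have h1 : 1 ≤ x := (Finset.mem_Icc.1 (hT hx)).1
    have hsub : Finset.Icc 1 x ⊆ T := fun y hy =>
      hdown x hx y (Finset.mem_Icc.1 hy).1 (Finset.mem_Icc.1 hy).2
    have := Finset.card_le_card hsub
    simp [Nat.card_Icc] at this
    exact ⟨h1, this⟩
  · rintro ⟨h1, h2⟩
    by_contra hx
    have hsub : T ⊆ Finset.Icc 1 (x - 1) := by
      intro y hy
      have hy1 := Finset.mem_Icc.1 (hT hy)
      refine Finset.mem_Icc.2 ⟨hy1.1, ?_⟩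
      by_contra hyx
      exact hx (hdown y hy x h1 (by omega))
    have := Finset.card_le_card hsub
    simp [Nat.card_Icc] at this
    omega

lemma birkhoff_gaussMultinom_empty {K : Type*} [Field K] (Y : K) (n : ℕ) :
    gaussMultinom Y n ∅ = 1 := by
  simp [gaussMultinom, gaussMultinomAux, Finset.sort_empty]

lemma birkhoff_sort_insert_max {x : ℕ} {s : Finset ℕ} (h : ∀ y ∈ s, y < x) :
    (insert x s).sort (· ≤ ·) = s.sort (· ≤ ·) ++ [x] := by
  have hx : x ∉ s := fun hm => lt_irrefl x (h x hm)
  refine List.Perm.eq_of_pairwise' (r := (· ≤ ·)) ?_ ?_ ?_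
  rotate_right
  · have p1 : ((insert x s).sort (· ≤ ·)).Perm (insert x s).toList := Finset.sort_perm_toList _ _
    have p2 : ((insert x s).toList).Perm (x :: s.toList) := by
      exact Finset.toList_insert hx
    have p3 : (x :: s.toList).Perm (x :: s.sort (· ≤ ·)) :=
      List.Perm.cons x (Finset.sort_perm_toList _ _).symm
    have p4 : (x :: s.sort (· ≤ ·)).Perm (s.sort (· ≤ ·) ++ [x]) := by
      simpa using (List.perm_append_comm (l₁ := [x]) (l₂ := s.sort (· ≤ ·)))
    exact ((p1.trans p2).trans p3).trans p4
  · exact Finset.pairwise_sort _ _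
  · rw [List.pairwise_append]
    refine ⟨Finset.pairwise_sort _ _, List.pairwise_singleton _ x, ?_⟩
    intro a ha b hb
    rw [List.mem_singleton] at hb
    subst hb
    exact (h a (by rwa [Finset.mem_sort] at ha)).le

lemma birkhoff_gaussMultinom_insert_max {K : Type*} [Field K] (Y : K) (n x : ℕ) (s : Finset ℕ)
    (h : ∀ y ∈ s, y < x) :
    gaussMultinom Y n (insert x s) = gaussBinom Y n x * gaussMultinom Y x s := by
  rw [gaussMultinom, birkhoff_sort_insert_max h, List.reverse_append]
  simp [gaussMultinomAux, gaussMultinom]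

lemma birkhoff_core (p : ℕ) (hp : 2 ≤ p) : ∀ m : ℕ, ∀ (u : ℕ → ℕ) (a : ℕ), 1 ≤ m →
    (∀ s t, 1 ≤ s → s ≤ t → t ≤ m → u t ≤ u s) →
    (∀ j, 1 ≤ j → j ≤ m → a < u j) →
    gaussMultinom ((p : ℚ)⁻¹) m
        ((Finset.Icc 1 (m - 1)).filter (fun j => u (m - j + 1) < u (m - j))) *
      ∏ k ∈ Finset.Icc (a + 1) (u 1),
        qfac ((p : ℚ)⁻¹) (((Finset.Icc 1 m).filter (fun j => u j = k)).card)
    = qfac ((p : ℚ)⁻¹) m := by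
  intro m
  induction m using Nat.strong_induction_on with
  | _ m IH =>
  intro u a hm hanti hlb
  set Y : ℚ := (p : ℚ)⁻¹ with hYdef
  have hq0 : ∀ t, qfac Y t ≠ 0 := qfac_ne_zero p hp
  set b := u 1 with hbdef
  set T := (Finset.Icc 1 m).filter (fun j => u j = b) with hTdef
  set q := T.card with hqdef
  have hble : ∀ j, 1 ≤ j → j ≤ m → u j ≤ b := fun j h1 h2 => hanti 1 j le_rfl h1 h2
  have hTd : T = Finset.Icc 1 q := by
    apply finset_downset (Finset.filter_subset _ _)
    intro j hj j' h1 h2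
    simp only [hTdef, Finset.mem_filter, Finset.mem_Icc] at hj ⊢
    refine ⟨⟨h1, le_trans h2 hj.1.2⟩, le_antisymm (hble j' h1 (le_trans h2 hj.1.2)) ?_⟩
    rw [← hj.2]
    exact hanti j' j h1 h2 hj.1.2
  have h1T : (1 : ℕ) ∈ T :=
    Finset.mem_filter.2 ⟨Finset.mem_Icc.2 ⟨le_rfl, hm⟩, rfl⟩
  have hq1 : 1 ≤ q := Finset.card_pos.2 ⟨1, h1T⟩
  have hqm : q ≤ m := by
    have := Finset.card_le_card (Finset.filter_subset (fun j => u j = b) (Finset.Icc 1 m))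
    simpa [hqdef, hTdef, Nat.card_Icc] using this
  have hub : ∀ j, 1 ≤ j → j ≤ m → (u j = b ↔ j ≤ q) := by
    intro j h1 h2
    constructor
    · intro h
      have : j ∈ T := by simp [hTdef, Finset.mem_filter, Finset.mem_Icc, h1, h2, h]
      rw [hTd] at this
      exact (Finset.mem_Icc.1 this).2
    · intro h
      have : j ∈ T := by rw [hTd]; exact Finset.mem_Icc.2 ⟨h1, h⟩
      simpa [hTdef] using ((Finset.mem_filter.1 this).2)
  have hab : a + 1 ≤ b := hlb 1 le_rfl hm
  by_cases hcase : q = m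
  · -- all values equal b
    have hall : ∀ j, 1 ≤ j → j ≤ m → u j = b := fun j h1 h2 => (hub j h1 h2).2 (by omega)
    have hJ : (Finset.Icc 1 (m - 1)).filter (fun j => u (m - j + 1) < u (m - j)) = ∅ := by
      apply Finset.filter_eq_empty_iff.2
      intro j hj
      rw [Finset.mem_Icc] at hj
      rw [hall (m - j + 1) (by omega) (by omega), hall (m - j) (by omega) (by omega)]
      exact lt_irrefl b
    rw [hJ, birkhoff_gaussMultinom_empty, one_mul]
    rw [show Finset.Icc (a + 1) b = Finset.Icc (a + 1) ((b - 1) + 1) by rw [Nat.sub_add_cancel (by omega)]]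
    rw [Finset.prod_Icc_succ_top (by omega)]
    have hz : ∀ k ∈ Finset.Icc (a + 1) (b - 1),
        qfac Y (((Finset.Icc 1 m).filter (fun j => u j = k)).card) = 1 := by
      intro k hk
      rw [Finset.mem_Icc] at hk
      have : (Finset.Icc 1 m).filter (fun j => u j = k) = ∅ := by
        apply Finset.filter_eq_empty_iff.2
        intro j hj
        rw [Finset.mem_Icc] at hj
        rw [hall j hj.1 hj.2]
        omega
      rw [this]
      simp [qfac_zero]
    rw [Finset.prod_eq_one hz, one_mul, Nat.sub_add_cancel (by omega)]
    have : (Finset.Icc 1 m).filter (fun j => u j = b) = Finset.Icc 1 m := by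
      apply Finset.filter_true_of_mem
      intro j hj
      rw [Finset.mem_Icc] at hj
      exact hall j hj.1 hj.2
    rw [this, Nat.card_Icc, Nat.add_sub_cancel]
  · -- q < m
    have hqlt : q < m := lt_of_le_of_ne hqm hcase
    set m' := m - q with hm'def
    have hm'1 : 1 ≤ m' := by omega
    set u' : ℕ → ℕ := fun j => u (j + q) with hu'def
    set b' := u (1 + q) with hb'def
    have hb'b : b' < b := by
      have hle := hble (1 + q) (by omega) (by omega)
      have hne : u (1 + q) ≠ b := by
        intro h
        have := (hub (1 + q) (by omega) (by omega)).1 h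
        omega
      omega
    have hIH := IH m' (by omega) u' a hm'1
      (fun s t h1 h2 h3 => hanti (s + q) (t + q) (by omega) (by omega) (by omega))
      (fun j h1 h2 => hlb (j + q) (by omega) (by omega))
    set J₀ := (Finset.Icc 1 (m' - 1)).filter (fun j => u (m - j + 1) < u (m - j)) with hJ₀def
    have step1 : (Finset.Icc 1 (m' - 1)).filter (fun j => u' (m' - j + 1) < u' (m' - j)) = J₀ := by
      apply Finset.filter_congr
      intro j hj
      rw [Finset.mem_Icc] at hj
      simp only [hu'def]
      rw [show m' - j + 1 + q = m - j + 1 by omega, show m' - j + q = m - j by omega]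
    have step2 : (Finset.Icc 1 (m - 1)).filter (fun j => u (m - j + 1) < u (m - j))
        = insert m' J₀ := by
      ext j
      simp only [Finset.mem_filter, Finset.mem_Icc, Finset.mem_insert, hJ₀def]
      constructor
      · rintro ⟨⟨h1, h2⟩, h3⟩
        rcases Nat.lt_trichotomy j m' with h | h | h
        · right; exact ⟨⟨h1, by omega⟩, h3⟩
        · left; exact h
        · -- j > m' : both indices in the top run, contradiction
          exfalso
          have e1 : u (m - j + 1) = b := (hub (m - j + 1) (by omega) (by omega)).2 (by omega)
          have e2 : u (m - j) = b := (hub (m - j) (by omega) (by omega)).2 (by omega)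
          rw [e1, e2] at h3
          exact lt_irrefl b h3
      · rintro (h | ⟨⟨h1, h2⟩, h3⟩)
        · subst h
          refine ⟨⟨by omega, by omega⟩, ?_⟩
          rw [show m - m' + 1 = 1 + q by omega, show m - m' = q by omega]
          have : u q = b := (hub q hq1 (by omega)).2 le_rfl
          rw [this]
          exact hb'b
        · exact ⟨⟨h1, by omega⟩, h3⟩
    have hJ₀sub : ∀ y ∈ J₀, y < m' := by
      intro y hy
      have := (Finset.mem_Icc.1 (Finset.mem_filter.1 hy).1).2
      omega
    have step3 : gaussMultinom Y m (insert m' J₀)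
        = gaussBinom Y m m' * gaussMultinom Y m' J₀ :=
      birkhoff_gaussMultinom_insert_max Y m m' J₀ hJ₀sub
    -- split the product
    have hsplit : Finset.Icc (a + 1) b = Finset.Icc (a + 1) b' ∪ Finset.Icc (b' + 1) b := by
      ext k
      simp only [Finset.mem_union, Finset.mem_Icc]
      have : a < b' := hlb (1 + q) (by omega) (by omega)
      omega
    have hdisj : Disjoint (Finset.Icc (a + 1) b') (Finset.Icc (b' + 1) b) := by
      rw [Finset.disjoint_left]
      intro k hk hk'
      rw [Finset.mem_Icc] at hk hk'
      omega
    have step5 : ∀ k ∈ Finset.Icc (a + 1) b',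
        qfac Y (((Finset.Icc 1 m).filter (fun j => u j = k)).card)
          = qfac Y (((Finset.Icc 1 m').filter (fun j => u' j = k)).card) := by
      intro k hk
      rw [Finset.mem_Icc] at hk
      congr 1
      apply Finset.card_bij' (i := fun j _ => j - q) (j := fun j _ => j + q)
      · intro j hj
        rw [Finset.mem_filter, Finset.mem_Icc] at hj
        have hjq : q < j := by
          by_contra hc
          have : u j = b := (hub j hj.1.1 hj.1.2).2 (by omega)
          omega
        rw [Finset.mem_filter, Finset.mem_Icc]
        refine ⟨⟨by omega, by omega⟩, ?_⟩
        simp only [hu'def]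
        rw [show j - q + q = j by omega]
        exact hj.2
      · intro j hj
        rw [Finset.mem_filter, Finset.mem_Icc] at hj
        rw [Finset.mem_filter, Finset.mem_Icc]
        exact ⟨⟨by omega, by omega⟩, hj.2⟩
      · intro j hj
        rw [Finset.mem_filter, Finset.mem_Icc] at hj
        have hjq : q < j := by
          by_contra hc
          have : u j = b := (hub j hj.1.1 hj.1.2).2 (by omega)
          omega
        omega
      · intro j _; omega
    have step6 : ∏ k ∈ Finset.Icc (b' + 1) b,
        qfac Y (((Finset.Icc 1 m).filter (fun j => u j = k)).card) = qfac Y q := by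
      rw [show Finset.Icc (b' + 1) b = Finset.Icc (b' + 1) ((b - 1) + 1) by
        rw [Nat.sub_add_cancel (by omega)]]
      rw [Finset.prod_Icc_succ_top (by omega)]
      have hz : ∀ k ∈ Finset.Icc (b' + 1) (b - 1),
          qfac Y (((Finset.Icc 1 m).filter (fun j => u j = k)).card) = 1 := by
        intro k hk
        rw [Finset.mem_Icc] at hk
        have : (Finset.Icc 1 m).filter (fun j => u j = k) = ∅ := by
          apply Finset.filter_eq_empty_iff.2
          intro j hj
          rw [Finset.mem_Icc] at hj
          rcases le_or_gt j q with h | h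
          · have : u j = b := (hub j hj.1 hj.2).2 h
            omega
          · have : u j ≤ b' := hanti (1 + q) j (by omega) (by omega) hj.2
            omega
        rw [this]
        simp [qfac_zero]
      rw [Finset.prod_eq_one hz, one_mul, Nat.sub_add_cancel (by omega)]
    rw [step2, step3, hsplit, Finset.prod_union hdisj, Finset.prod_congr rfl step5, step6]
    rw [step1] at hIH
    have hbinom : gaussBinom Y m m' = qfac Y m / (qfac Y q * qfac Y m') := by
      rw [gaussBinom_eq Y hq0 (by omega : m' ≤ m), show m - m' = q by omega]
    rw [hbinom]
    calc qfac Y m / (qfac Y q * qfac Y m') * gaussMultinom Y m' J₀ *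
          ((∏ k ∈ Finset.Icc (a + 1) b',
            qfac Y (((Finset.Icc 1 m').filter (fun j => u' j = k)).card)) * qfac Y q)
        = qfac Y m / (qfac Y q * qfac Y m') *
          (gaussMultinom Y m' J₀ * ∏ k ∈ Finset.Icc (a + 1) b',
            qfac Y (((Finset.Icc 1 m').filter (fun j => u' j = k)).card)) * qfac Y q := by
          ring
      _ = qfac Y m / (qfac Y q * qfac Y m') * qfac Y m' * qfac Y q := by rw [hIH]
      _ = qfac Y m := by
          field_simp
          rw [div_eq_iff (mul_ne_zero (hq0 q) (hq0 m'))]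
          ring

/-- Lemma on the `μ`-pieces of Birkhoff's formula: for partitions `μ ≤ λ` with
`w(μ,λ) = w` for the Dyck word `w` with parameters `(r, L, M)`, and for `i ∈ {1,…,r-1}`,
`∏_{k=λ_{L_i+1}+1}^{μ_{M_{i-1}+1}} p^{μ'_k(λ'_k-μ'_k)} binom(λ'_k-μ'_{k+1}, λ'_k-μ'_k)_{p⁻¹}
 = (∏_{j=1}^{M_i-M_{i-1}} p^{(M_{i-1}+j)(L_i-M_{i-1}-j) r_{M_{i-1}+j}})
   · binom(M_i-M_{i-1}, J_i^μ)_{p⁻¹} · binom(L_i-M_{i-1}, L_i-M_i)_{p⁻¹}`. -/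
theorem birkhoff_mu_piece (p n r : ℕ) (hp : p.Prime) (L M : ℕ → ℕ)
    (hDyck : DyckParams n r L M) (lam mu : ℕ → ℕ)
    (hlam : IsPartition n lam) (hmu : IsPartition n mu) (hle : ∀ j, mu j ≤ lam j)
    (hw : WMatch r L M mu lam)
    (rs : ℕ → ℕ)
    (hrs1 : ∀ j ∈ Finset.Icc 1 n, (∀ i ∈ Finset.Icc 1 r, M i ≠ j) →
      rs j = mu j - mu (j + 1))
    (hrs2 : ∀ i ∈ Finset.Icc 1 r, rs (M i) = mu (M i) - lam (L i + 1))
    (i : ℕ) (hi : i ∈ Finset.Icc 1 (r - 1)) :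
    ∏ k ∈ Finset.Icc (lam (L i + 1) + 1) (mu (M (i - 1) + 1)),
        ((p : ℚ) ^ (dualPart n mu k * (dualPart n lam k - dualPart n mu k)) *
          gaussBinom ((p : ℚ)⁻¹) (dualPart n lam k - dualPart n mu (k + 1))
            (dualPart n lam k - dualPart n mu k)) =
      (∏ j ∈ Finset.Icc 1 (M i - M (i - 1)),
          (p : ℚ) ^ ((M (i - 1) + j) * (L i - M (i - 1) - j) * rs (M (i - 1) + j))) *
        gaussMultinom ((p : ℚ)⁻¹) (M i - M (i - 1))
          ((Finset.Icc 1 (M i - M (i - 1) - 1)).filter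
            fun j => mu (M i - j + 1) < mu (M i - j)) *
        gaussBinom ((p : ℚ)⁻¹) (L i - M (i - 1)) (L i - M i) := by

  obtain ⟨hi1, hir⟩ := Finset.mem_Icc.1 hi
  have hr1 : 1 ≤ r := hDyck.1
  have hr2 : 2 ≤ r := by omega
  obtain ⟨-, hL0, hM0, hLr, hMr, hstep⟩ := hDyck
  -- monotonicity of step functions
  have key : ∀ (F : ℕ → ℕ), (∀ t ∈ Finset.Icc 1 r, F (t - 1) < F t) →
      ∀ s t, s ≤ t → t ≤ r → F s ≤ F t := by
    intro F hF s t hst htr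
    induction t with
    | zero => have : s = 0 := by omega
              subst this; exact le_rfl
    | succ t ih =>
      rcases Nat.eq_or_lt_of_le hst with h | h
      · rw [h]
      · have h1 : F s ≤ F t := ih (by omega) (by omega)
        have h2 : F t < F (t + 1) := by
          have := hF (t + 1) (Finset.mem_Icc.2 ⟨by omega, htr⟩)
          simpa using this
        omega
  have hMst : ∀ s t, s ≤ t → t ≤ r → M s ≤ M t := key M (fun t ht => (hstep t ht).2.1)
  have hLst : ∀ s t, s ≤ t → t ≤ r → L s ≤ L t := key L (fun t ht => (hstep t ht).1)
  have hMstrict : ∀ s t, s < t → t ≤ r → M s < M t := by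
    intro s t hst htr
    have h1 : M s ≤ M (t - 1) := hMst s (t - 1) (by omega) (by omega)
    have h2 : M (t - 1) < M t := (hstep t (Finset.mem_Icc.2 ⟨by omega, htr⟩)).2.1
    omega
  have hLstrict : ∀ s t, s < t → t ≤ r → L s < L t := by
    intro s t hst htr
    have h1 : L s ≤ L (t - 1) := hLst s (t - 1) (by omega) (by omega)
    have h2 : L (t - 1) < L t := (hstep t (Finset.mem_Icc.2 ⟨by omega, htr⟩)).1
    omega
  have hMlt : M (i - 1) < M i := hMstrict (i - 1) i (by omega) (by omega)
  have hML : M i ≤ L i := (hstep i (Finset.mem_Icc.2 ⟨hi1, by omega⟩)).2.2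
  have hMn : M i ≤ n := by have := hMst i r (by omega) le_rfl; omega
  have hLn : L i ≤ n := by have := hLst i r (by omega) le_rfl; omega
  have hL1 : 1 ≤ L i := by have := hLstrict 0 i (by omega) (by omega); omega
  -- antitonicity of mu and lam
  have hmu_anti : ∀ s t, 1 ≤ s → s ≤ t → mu t ≤ mu s := by
    intro s t h1 hst
    induction t with
    | zero => omega
    | succ t ih =>
      rcases Nat.eq_or_lt_of_le hst with h | h
      · rw [h]
      · exact le_trans (hmu.1 t (by omega)) (ih (by omega))
  have hlam_anti : ∀ s t, 1 ≤ s → s ≤ t → lam t ≤ lam s := by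
    intro s t h1 hst
    induction t with
    | zero => omega
    | succ t ih =>
      rcases Nat.eq_or_lt_of_le hst with h | h
      · rw [h]
      · exact le_trans (hlam.1 t (by omega)) (ih (by omega))
  have hwa := hw.1
  have hwb := hw.2
  set a := lam (L i + 1) with hadef
  set b := mu (M (i - 1) + 1) with hbdef
  have hblam : b ≤ lam (L i) := hwa i (Finset.mem_Icc.2 ⟨hi1, by omega⟩)
  have hamu : a < mu (M i) := hwb i hi
  have hab : a < b :=
    lt_of_lt_of_le hamu (hmu_anti (M (i - 1) + 1) (M i) (by omega) (by omega))
  have htop : ∀ j, 1 ≤ j → j ≤ M (i - 1) → b + 1 ≤ mu j := by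
    intro j h1 h2
    rcases Nat.lt_or_ge i 2 with hi2 | hi2
    · exfalso
      have : M (i - 1) = 0 := by rw [show i - 1 = 0 by omega]; exact hM0
      omega
    · have h3 : lam (L (i - 1) + 1) < mu (M (i - 1)) :=
        hwb (i - 1) (Finset.mem_Icc.2 ⟨by omega, by omega⟩)
      have h4 : L (i - 1) + 1 ≤ L i := hLstrict (i - 1) i (by omega) (by omega)
      have h5 : lam (L i) ≤ lam (L (i - 1) + 1) := hlam_anti (L (i - 1) + 1) (L i) (by omega) h4
      have h6 : mu (M (i - 1)) ≤ mu j := hmu_anti j (M (i - 1)) h1 h2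
      omega
  have hbot : ∀ j, M i < j → mu j ≤ a := by
    intro j hj
    have h5 : mu (M ((i + 1) - 1) + 1) ≤ lam (L (i + 1)) :=
      hwa (i + 1) (Finset.mem_Icc.2 ⟨by omega, by omega⟩)
    rw [Nat.add_sub_cancel] at h5
    have h6 : L i + 1 ≤ L (i + 1) := hLstrict i (i + 1) (by omega) (by omega)
    have h7 : lam (L (i + 1)) ≤ lam (L i + 1) := hlam_anti _ _ (by omega) h6
    have h8 : mu j ≤ mu (M i + 1) := hmu_anti (M i + 1) j (by omega) hj
    omega
  set m := M i - M (i - 1) with hmdef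
  have hm1 : 1 ≤ m := by omega
  have hMm : M (i - 1) + m = M i := by omega
  set u : ℕ → ℕ := fun j => mu (M (i - 1) + j) with hudef
  have hu1 : u 1 = b := rfl
  have hum : u m = mu (M i) := by show mu (M (i - 1) + m) = mu (M i); rw [hMm]
  set cfun : ℕ → ℕ := fun k => ((Finset.Icc 1 m).filter (fun j => k ≤ u j)).card with hcdef
  have hu_anti : ∀ s t, 1 ≤ s → s ≤ t → t ≤ m → u t ≤ u s := fun s t h1 h2 _ =>
    hmu_anti (M (i - 1) + s) (M (i - 1) + t) (by omega) (by omega)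
  have hua : ∀ j, 1 ≤ j → j ≤ m → a < u j := by
    intro j h1 h2
    have : mu (M i) ≤ u j := by
      rw [← hum]; exact hu_anti j m h1 h2 le_rfl
    omega
  have hdownT : ∀ k, (Finset.Icc 1 m).filter (fun j => k ≤ u j) = Finset.Icc 1 (cfun k) := by
    intro k
    apply finset_downset (Finset.filter_subset _ _)
    intro j hj j' h1 h2
    rw [Finset.mem_filter, Finset.mem_Icc] at hj ⊢
    exact ⟨⟨h1, le_trans h2 hj.1.2⟩, le_trans hj.2 (hu_anti j' j h1 h2 hj.1.2)⟩
  have hcfun_le : ∀ k, cfun k ≤ m := by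
    intro k
    have := Finset.card_le_card (Finset.filter_subset (fun j => k ≤ u j) (Finset.Icc 1 m))
    simpa [Nat.card_Icc] using this
  have hciff : ∀ k j, 1 ≤ j → j ≤ m → (k ≤ u j ↔ j ≤ cfun k) := by
    intro k j h1 h2
    constructor
    · intro h
      have hmem : j ∈ (Finset.Icc 1 m).filter (fun j => k ≤ u j) :=
        Finset.mem_filter.2 ⟨Finset.mem_Icc.2 ⟨h1, h2⟩, h⟩
      rw [hdownT] at hmem
      exact (Finset.mem_Icc.1 hmem).2
    · intro h
      have hmem : j ∈ Finset.Icc 1 (cfun k) := Finset.mem_Icc.2 ⟨h1, h⟩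
      rw [← hdownT] at hmem
      exact (Finset.mem_filter.1 hmem).2
  have hcb : cfun (b + 1) = 0 := by
    by_contra h
    have h1 : 1 ≤ cfun (b + 1) := by omega
    have := (hciff (b + 1) 1 le_rfl hm1).2 h1
    rw [hu1] at this
    omega
  have hca : cfun (a + 1) = m :=
    le_antisymm (hcfun_le _) ((hciff (a + 1) m hm1 le_rfl).1 (by have := hua m hm1 le_rfl; omega))
  have hcanti : ∀ k, cfun (k + 1) ≤ cfun k := by
    intro k
    apply Finset.card_le_card
    intro x hx
    rw [Finset.mem_filter] at hx ⊢
    exact ⟨hx.1, by omega⟩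
  -- dual part computations
  have hdual_lam : ∀ k, a + 1 ≤ k → k ≤ b → dualPart n lam k = L i := by
    intro k hk1 hk2
    rw [dualPart]
    have hset : (Finset.Icc 1 n).filter (fun j => k ≤ lam j) = Finset.Icc 1 (L i) := by
      ext j
      rw [Finset.mem_filter, Finset.mem_Icc, Finset.mem_Icc]
      constructor
      · rintro ⟨⟨h1, h2⟩, h3⟩
        refine ⟨h1, ?_⟩
        by_contra hc
        have : lam j ≤ a := by
          rw [hadef]; exact hlam_anti (L i + 1) j (by omega) (by omega)
        omega
      · rintro ⟨h1, h2⟩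
        have h3 : lam (L i) ≤ lam j := hlam_anti j (L i) h1 h2
        exact ⟨⟨h1, le_trans h2 hLn⟩, by omega⟩
    rw [hset, Nat.card_Icc, Nat.add_sub_cancel]
  have hdual_mu : ∀ k, a + 1 ≤ k → k ≤ b + 1 → dualPart n mu k = M (i - 1) + cfun k := by
    intro k hk1 hk2
    rw [dualPart]
    have hsplitn : Finset.Icc 1 n = Finset.Icc 1 (M (i - 1)) ∪ Finset.Icc (M (i - 1) + 1) n := by
      ext x
      simp only [Finset.mem_Icc, Finset.mem_union]
      omega
    rw [hsplitn, Finset.filter_union, Finset.card_union_of_disjoint (by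
      apply Finset.disjoint_filter_filter
      rw [Finset.disjoint_left]
      intro x hx hx'
      rw [Finset.mem_Icc] at hx hx'
      omega)]
    have hc1 : ((Finset.Icc 1 (M (i - 1))).filter (fun j => k ≤ mu j)).card = M (i - 1) := by
      rw [Finset.filter_true_of_mem, Nat.card_Icc, Nat.add_sub_cancel]
      intro j hj
      rw [Finset.mem_Icc] at hj
      have := htop j hj.1 hj.2
      omega
    have hc2 : ((Finset.Icc (M (i - 1) + 1) n).filter (fun j => k ≤ mu j)).card = cfun k := by
      show _ = ((Finset.Icc 1 m).filter (fun j => k ≤ u j)).card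
      apply Finset.card_bij' (i := fun j _ => j - M (i - 1)) (j := fun j _ => j + M (i - 1))
      · intro j hj
        rw [Finset.mem_filter, Finset.mem_Icc] at hj
        have hjM : j ≤ M i := by
          by_contra hc
          have := hbot j (by omega)
          omega
        rw [Finset.mem_filter, Finset.mem_Icc]
        refine ⟨⟨by omega, by omega⟩, ?_⟩
        show k ≤ mu (M (i - 1) + (j - M (i - 1)))
        rw [show M (i - 1) + (j - M (i - 1)) = j by omega]
        exact hj.2
      · intro j hj
        rw [Finset.mem_filter, Finset.mem_Icc] at hj
        rw [Finset.mem_filter, Finset.mem_Icc]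
        refine ⟨⟨by omega, by omega⟩, ?_⟩
        show k ≤ mu (j + M (i - 1))
        rw [show j + M (i - 1) = M (i - 1) + j by omega]
        exact hj.2
      · intro j hj
        rw [Finset.mem_filter, Finset.mem_Icc] at hj
        omega
      · intro j _
        omega
    rw [hc1, hc2]
  -- fiber cardinalities
  have hfibcard : ∀ j, 1 ≤ j → j ≤ m →
      ((Finset.Icc (a + 1) b).filter (fun k => cfun k = j)).card = rs (M (i - 1) + j) := by
    intro j h1 h2
    rcases Nat.eq_or_lt_of_le h2 with hjm | hjm
    · have hfe : (Finset.Icc (a + 1) b).filter (fun k => cfun k = j)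
          = Finset.Icc (a + 1) (u j) := by
        ext k
        rw [Finset.mem_filter, Finset.mem_Icc, Finset.mem_Icc]
        constructor
        · rintro ⟨⟨hk1, hk2⟩, hk3⟩
          exact ⟨hk1, (hciff k j h1 (by omega)).2 (by omega)⟩
        · rintro ⟨hk1, hk2⟩
          have hm' : j ≤ cfun k := (hciff k j h1 (by omega)).1 hk2
          have hle' : cfun k ≤ m := hcfun_le k
          have hkb : k ≤ b := by
            rw [← hu1]
            exact le_trans hk2 (hu_anti 1 j le_rfl h1 (by omega))
          exact ⟨⟨hk1, hkb⟩, by omega⟩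
      rw [hfe, Nat.card_Icc]
      rw [show M (i - 1) + j = M i by omega]
      rw [hrs2 i (Finset.mem_Icc.2 ⟨hi1, by omega⟩)]
      have hum' : u j = mu (M i) := by rw [hjm]; exact hum
      omega
    · have hfe : (Finset.Icc (a + 1) b).filter (fun k => cfun k = j)
          = Finset.Icc (u (j + 1) + 1) (u j) := by
        ext k
        rw [Finset.mem_filter, Finset.mem_Icc, Finset.mem_Icc]
        have hja : a < u (j + 1) := hua (j + 1) (by omega) (by omega)
        have hjb : u j ≤ b := by rw [← hu1]; exact hu_anti 1 j le_rfl h1 (by omega)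
        constructor
        · rintro ⟨⟨hk1, hk2⟩, hk3⟩
          have e1 : k ≤ u j := (hciff k j h1 (by omega)).2 (by omega)
          have e2 : ¬ (k ≤ u (j + 1)) := by
            intro hc
            have := (hciff k (j + 1) (by omega) (by omega)).1 hc
            omega
          omega
        · rintro ⟨hk1, hk2⟩
          have e1 : j ≤ cfun k := (hciff k j h1 (by omega)).1 hk2
          have e2 : ¬ (j + 1 ≤ cfun k) := by
            intro hc
            have := (hciff k (j + 1) (by omega) (by omega)).2 hc
            omega
          exact ⟨⟨by omega, by omega⟩, by omega⟩
      rw [hfe, Nat.card_Icc]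
      rw [hrs1 (M (i - 1) + j) (Finset.mem_Icc.2 ⟨by omega, by omega⟩) ?_]
      · have e1 : u j = mu (M (i - 1) + j) := rfl
        have e2 : u (j + 1) = mu (M (i - 1) + j + 1) := rfl
        omega
      · intro t ht
        rw [Finset.mem_Icc] at ht
        rcases le_or_gt t (i - 1) with h | h
        · have := hMst t (i - 1) h (by omega)
          omega
        · have := hMst i t (by omega) ht.2
          omega
  -- main rewriting
  set Y := (p : ℚ)⁻¹ with hYdef
  have hq0 : ∀ t, qfac Y t ≠ 0 := qfac_ne_zero p hp.two_le
  have hL1fact : ∀ k ∈ Finset.Icc (a + 1) b,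
      (p : ℚ) ^ (dualPart n mu k * (dualPart n lam k - dualPart n mu k)) *
        gaussBinom Y (dualPart n lam k - dualPart n mu (k + 1))
          (dualPart n lam k - dualPart n mu k)
      = (p : ℚ) ^ ((M (i - 1) + cfun k) * (L i - (M (i - 1) + cfun k))) *
        ((qfac Y (L i - (M (i - 1) + cfun (k + 1))) *
            (qfac Y (L i - (M (i - 1) + cfun k)))⁻¹) *
          (qfac Y (cfun k - cfun (k + 1)))⁻¹) := by
    intro k hk
    rw [Finset.mem_Icc] at hk
    rw [hdual_lam k hk.1 hk.2, hdual_mu k hk.1 (by omega), hdual_mu (k + 1) (by omega) (by omega)]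
    have hck : cfun k ≤ m := hcfun_le k
    have hck1 : cfun (k + 1) ≤ cfun k := hcanti k
    have hb1 : L i - (M (i - 1) + cfun k) ≤ L i - (M (i - 1) + cfun (k + 1)) := by omega
    rw [gaussBinom_eq Y hq0 hb1]
    rw [show L i - (M (i - 1) + cfun (k + 1)) - (L i - (M (i - 1) + cfun k))
        = cfun k - cfun (k + 1) by omega]
    rw [div_eq_mul_inv, mul_inv]
    ring
  rw [Finset.prod_congr rfl hL1fact, Finset.prod_mul_distrib, Finset.prod_mul_distrib]
  -- the power part
  have hP : (∏ k ∈ Finset.Icc (a + 1) b,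
        (p : ℚ) ^ ((M (i - 1) + cfun k) * (L i - (M (i - 1) + cfun k))))
      = ∏ j ∈ Finset.Icc 1 m,
          (p : ℚ) ^ ((M (i - 1) + j) * (L i - M (i - 1) - j) * rs (M (i - 1) + j)) := by
    rw [← Finset.prod_fiberwise_of_maps_to (g := cfun) (t := Finset.Icc 1 m) (fun k hk => by
      rw [Finset.mem_Icc] at hk
      rw [Finset.mem_Icc]
      refine ⟨?_, hcfun_le k⟩
      exact (hciff k 1 le_rfl hm1).1 (by rw [hu1]; omega))]
    apply Finset.prod_congr rfl
    intro j hj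
    rw [Finset.mem_Icc] at hj
    have hcongr : ∀ k ∈ (Finset.Icc (a + 1) b).filter (fun k => cfun k = j),
        (p : ℚ) ^ ((M (i - 1) + cfun k) * (L i - (M (i - 1) + cfun k)))
          = (p : ℚ) ^ ((M (i - 1) + j) * (L i - (M (i - 1) + j))) := by
      intro k hk
      rw [(Finset.mem_filter.1 hk).2]
    rw [Finset.prod_congr rfl hcongr, Finset.prod_const, ← pow_mul]
    rw [hfibcard j hj.1 hj.2, Nat.sub_sub]
  rw [hP]
  -- the telescoping part
  have hT2 : (∏ k ∈ Finset.Icc (a + 1) b,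
        (qfac Y (L i - (M (i - 1) + cfun (k + 1))) *
          (qfac Y (L i - (M (i - 1) + cfun k)))⁻¹))
      = qfac Y (L i - M (i - 1)) * (qfac Y (L i - M i))⁻¹ := by
    rw [qfac_telescope (fun k => qfac Y (L i - (M (i - 1) + cfun k))) (fun k => hq0 _) (a + 1) b
      (by omega)]
    show qfac Y (L i - (M (i - 1) + cfun (b + 1))) * (qfac Y (L i - (M (i - 1) + cfun (a + 1))))⁻¹ = _
    rw [hcb, hca, Nat.add_zero, hMm]
  rw [hT2]
  -- the multiplicity part via the birkhoff_core identity
  have hbirkhoff_core := birkhoff_core p hp.two_le m u a hm1 hu_anti hua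
  rw [hu1] at hbirkhoff_core
  have hdropmult : ∀ k ∈ Finset.Icc (a + 1) b,
      (qfac Y (cfun k - cfun (k + 1)))⁻¹
        = (qfac Y (((Finset.Icc 1 m).filter (fun j => u j = k)).card))⁻¹ := by
    intro k _
    congr 2
    have hss : (Finset.Icc 1 m).filter (fun j => (k + 1) ≤ u j)
        ⊆ (Finset.Icc 1 m).filter (fun j => k ≤ u j) := by
      intro x hx
      rw [Finset.mem_filter] at hx ⊢
      exact ⟨hx.1, by omega⟩
    have hsd : (Finset.Icc 1 m).filter (fun j => u j = k)
        = (Finset.Icc 1 m).filter (fun j => k ≤ u j)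
            \ (Finset.Icc 1 m).filter (fun j => (k + 1) ≤ u j) := by
      ext j
      simp only [Finset.mem_filter, Finset.mem_sdiff, Finset.mem_Icc]
      omega
    rw [hsd, Finset.card_sdiff_of_subset hss]
  rw [Finset.prod_congr rfl hdropmult, Finset.prod_inv_distrib]
  have hPi : (∏ k ∈ Finset.Icc (a + 1) b,
      qfac Y (((Finset.Icc 1 m).filter (fun j => u j = k)).card)) ≠ 0 :=
    Finset.prod_ne_zero_iff.2 (fun k _ => hq0 _)
  -- identify the index set of the multinomial
  have hJeq : ((Finset.Icc 1 (m - 1)).filter (fun j => mu (M i - j + 1) < mu (M i - j)))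
      = (Finset.Icc 1 (m - 1)).filter (fun j => u (m - j + 1) < u (m - j)) := by
    apply Finset.filter_congr
    intro j hj
    rw [Finset.mem_Icc] at hj
    have e1 : u (m - j) = mu (M i - j) := by
      show mu (M (i - 1) + (m - j)) = mu (M i - j)
      congr 1
      omega
    have e2 : u (m - j + 1) = mu (M i - j + 1) := by
      show mu (M (i - 1) + (m - j + 1)) = mu (M i - j + 1)
      congr 1
      omega
    rw [e1, e2]
  rw [hJeq]
  have hG : gaussMultinom Y m ((Finset.Icc 1 (m - 1)).filter (fun j => u (m - j + 1) < u (m - j)))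
      = qfac Y m / (∏ k ∈ Finset.Icc (a + 1) b,
          qfac Y (((Finset.Icc 1 m).filter (fun j => u j = k)).card)) := by
    rw [eq_div_iff hPi]
    exact hbirkhoff_core
  rw [hG]
  rw [gaussBinom_eq Y hq0 (by omega : L i - M i ≤ L i - M (i - 1))]
  rw [show L i - M (i - 1) - (L i - M i) = m by omega]
  field_simp
  rw [mul_div_mul_right _ _ (hq0 m)]
end

section
/- Let p be a prime and let μ ≤ λ be partitions with at most n parts such that w(μ,λ) = w for a Dyck word w of length 2n with parameters r, L_0,…,L_r, M_0,…,M_r. Then for every i ∈ {1,…,r−1}: ∏_{k=μ_{M_{i−1}+1}+1}^{λ_{L_{i−1}+1}} p^{μ'_k(λ'_k−μ'_k)} · binom(λ'_k−μ'_{k+1}, λ'_k−μ'_k)_{p^{-1}} = ∏_{j=1}^{L_i−L_{i−1}} p^{M_{i−1}(L_{i−1}−M_{i−1}+j)·s_{L_{i−1}+j}} (in particular all the Gaussian binomial coefficients on the left-hand side equal 1). -/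
private lemma birkhoff_mono_aux {f : ℕ → ℕ} {r : ℕ}
    (h : ∀ i ∈ Finset.Icc 1 r, f (i - 1) < f i) :
    ∀ x y, x < y → y ≤ r → f x < f y := by
  intro x y hxy hyr
  induction y with
  | zero => omega
  | succ y ih =>
    have hy : f y < f (y + 1) := by
      have := h (y + 1) (Finset.mem_Icc.2 ⟨by omega, by omega⟩)
      simpa using this
    rcases Nat.lt_or_ge x y with h' | h'
    · exact lt_trans (ih h' (by omega)) hy
    · have hxy' : x = y := by omega
      subst hxy'; exact hy

private lemma birkhoff_anti_aux {f : ℕ → ℕ} (h : ∀ j, 1 ≤ j → f (j + 1) ≤ f j) :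
    ∀ x y, 1 ≤ x → x ≤ y → f y ≤ f x := by
  intro x y hx hxy
  induction y with
  | zero => omega
  | succ y ih =>
    rcases Nat.lt_or_ge x (y + 1) with h' | h'
    · exact le_trans (h y (by omega)) (ih (by omega))
    · have hxy' : x = y + 1 := by omega
      rw [hxy']

private lemma birkhoff_dual_eq {n : ℕ} {lam : ℕ → ℕ}
    (hlam : ∀ x y, 1 ≤ x → x ≤ y → lam y ≤ lam x)
    {k m : ℕ} (hm : m ≤ n) (h1 : m = 0 ∨ k ≤ lam m) (h2 : lam (m + 1) < k) :
    dualPart n lam k = m := by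
  unfold dualPart
  have hfe : (Finset.Icc 1 n).filter (fun j => k ≤ lam j) = Finset.Icc 1 m := by
    ext j
    simp only [Finset.mem_filter, Finset.mem_Icc]
    constructor
    · rintro ⟨⟨hj1, hjn⟩, hk⟩
      refine ⟨hj1, ?_⟩
      by_contra hc
      have : lam j ≤ lam (m + 1) := hlam (m + 1) j (by omega) (by omega)
      omega
    · rintro ⟨hj1, hjm⟩
      refine ⟨⟨hj1, by omega⟩, ?_⟩
      rcases h1 with h1 | h1
      · omega
      · exact le_trans h1 (hlam j m hj1 hjm)
  rw [hfe, Nat.card_Icc]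
  omega

private lemma birkhoff_gaussBinom_self {K : Type*} [Field K] (Y : K) (e : ℕ)
    (h : ∀ i ∈ Finset.Icc 1 e, (1 : K) - Y ^ i ≠ 0) : gaussBinom Y e e = 1 := by
  unfold gaussBinom
  rw [Nat.sub_self]
  exact div_self (Finset.prod_ne_zero_iff.2 h)

private lemma birkhoff_tele (B : ℕ → ℤ) (c : ℤ) (d : ℕ) :
    ∑ j ∈ Finset.Icc 1 d, (c + j) * (B j - B (j + 1)) =
      c * B 1 + ∑ j ∈ Finset.Icc 1 d, B j - (c + d) * B (d + 1) := by
  induction d with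
  | zero => simp
  | succ d ih =>
    rw [Finset.sum_Icc_succ_top (by omega), Finset.sum_Icc_succ_top (by omega), ih]
    push_cast
    ring

/-- Lemma on the `λ`-pieces of Birkhoff's formula: for partitions `μ ≤ λ` with
`w(μ,λ) = w` for the Dyck word `w` with parameters `(r, L, M)`, and for `i ∈ {1,…,r-1}`,
`∏_{k=μ_{M_{i-1}+1}+1}^{λ_{L_{i-1}+1}} p^{μ'_k(λ'_k-μ'_k)} binom(λ'_k-μ'_{k+1}, λ'_k-μ'_k)_{p⁻¹}
 = ∏_{j=1}^{L_i-L_{i-1}} p^{M_{i-1}(L_{i-1}-M_{i-1}+j) s_{L_{i-1}+j}}`;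
in particular all the Gaussian binomial coefficients on the left-hand side equal `1`. -/
theorem birkhoff_lambda_piece (p n r : ℕ) (hp : p.Prime) (L M : ℕ → ℕ)
    (hDyck : DyckParams n r L M) (lam mu : ℕ → ℕ)
    (hlam : IsPartition n lam) (hmu : IsPartition n mu) (hle : ∀ j, mu j ≤ lam j)
    (hw : WMatch r L M mu lam)
    (ss : ℕ → ℕ)
    (hss1 : ∀ j ∈ Finset.Icc 1 n, (∀ i ∈ Finset.Icc 1 r, L i ≠ j) →
      ss j = lam j - lam (j + 1))
    (hss2 : ∀ i ∈ Finset.Icc 1 r, ss (L i) = lam (L i) - mu (M (i - 1) + 1))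
    (i : ℕ) (hi : i ∈ Finset.Icc 1 (r - 1)) :
    (∏ k ∈ Finset.Icc (mu (M (i - 1) + 1) + 1) (lam (L (i - 1) + 1)),
        ((p : ℚ) ^ (dualPart n mu k * (dualPart n lam k - dualPart n mu k)) *
          gaussBinom ((p : ℚ)⁻¹) (dualPart n lam k - dualPart n mu (k + 1))
            (dualPart n lam k - dualPart n mu k)) =
      ∏ j ∈ Finset.Icc 1 (L i - L (i - 1)),
        (p : ℚ) ^ (M (i - 1) * (L (i - 1) - M (i - 1) + j) * ss (L (i - 1) + j))) ∧
    ∀ k ∈ Finset.Icc (mu (M (i - 1) + 1) + 1) (lam (L (i - 1) + 1)),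
      gaussBinom ((p : ℚ)⁻¹) (dualPart n lam k - dualPart n mu (k + 1))
          (dualPart n lam k - dualPart n mu k) = 1 := by
  obtain ⟨hi1, hir⟩ := Finset.mem_Icc.mp hi
  obtain ⟨hr1, hL0, hM0, hLr, hMr, hstep⟩ := hDyck
  have hLs : ∀ x y, x < y → y ≤ r → L x < L y :=
    birkhoff_mono_aux (fun i hi => (hstep i hi).1)
  have hMs : ∀ x y, x < y → y ≤ r → M x < M y :=
    birkhoff_mono_aux (fun i hi => (hstep i hi).2.1)
  have lam_anti := birkhoff_anti_aux hlam.1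
  have mu_anti := birkhoff_anti_aux hmu.1
  set a := mu (M (i - 1) + 1) with ha
  set b := lam (L (i - 1) + 1) with hb
  set Mi := M (i - 1) with hMi
  set Li1 := L (i - 1) with hLi1
  set Li := L i with hLi
  set d := Li - Li1 with hd
  have hiir : i ≤ r := by omega
  have hLi1Li : Li1 < Li := hLs (i - 1) i (by omega) hiir
  have hLin : Li ≤ n := by
    rcases Nat.lt_or_ge i r with h | h
    · have := hLs i r h le_rfl; omega
    · have hir' : i = r := by omega
      rw [hLi, hir', hLr]
  have hMiLi1 : Mi ≤ Li1 := by
    rcases Nat.eq_or_lt_of_le hi1 with h | h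
    · simp [hMi, hLi1, ← h, hM0]
    · exact (hstep (i - 1) (Finset.mem_Icc.2 ⟨by omega, by omega⟩)).2.2
  have hMn : Mi ≤ n := by omega
  have hw1i : a ≤ lam Li := hw.1 i (Finset.mem_Icc.2 ⟨hi1, hiir⟩)
  have hw2i : lam (Li + 1) < mu (M i) := hw.2 i hi
  have hMi_lt : Mi < M i := hMs (i - 1) i (by omega) hiir
  have hmuMia : mu (M i) ≤ a := mu_anti (Mi + 1) (M i) (by omega) (by omega)
  have hlamLi1 : lam (Li + 1) < a := by omega
  have hba : a ≤ b := le_trans hw1i (lam_anti (Li1 + 1) Li (by omega) (by omega))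
  have hbmu : 2 ≤ i → b < mu Mi := fun h2 =>
    hw.2 (i - 1) (Finset.mem_Icc.2 ⟨by omega, by omega⟩)
  have hmu_dual : ∀ k, a + 1 ≤ k → k ≤ b + 1 → dualPart n mu k = Mi := by
    intro k hk1 hk2
    refine birkhoff_dual_eq mu_anti hMn ?_ (by omega)
    rcases Nat.eq_or_lt_of_le hi1 with h | h
    · left; simp [hMi, ← h, hM0]
    · right; have := hbmu (by omega); omega
  have hlam_ub : ∀ j, Li < j → lam j < a + 1 := by
    intro j hj
    have : lam j ≤ lam (Li + 1) := lam_anti (Li + 1) j (by omega) (by omega)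
    omega
  have hlam_mid : ∀ j, Li1 < j → j ≤ Li → a ≤ lam j ∧ lam j ≤ b := by
    intro j h1 h2
    exact ⟨le_trans hw1i (lam_anti j Li (by omega) h2),
      lam_anti (Li1 + 1) j (by omega) h1⟩
  -- part 2: all Gaussian binomials are 1
  have part2 : ∀ k ∈ Finset.Icc (a + 1) b,
      gaussBinom ((p : ℚ)⁻¹) (dualPart n lam k - dualPart n mu (k + 1))
        (dualPart n lam k - dualPart n mu k) = 1 := by
    intro k hk
    obtain ⟨hk1, hk2⟩ := Finset.mem_Icc.mp hk
    rw [hmu_dual k hk1 (by omega), hmu_dual (k + 1) (by omega) (by omega)]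
    apply birkhoff_gaussBinom_self
    intro m hm
    obtain ⟨hm1, _⟩ := Finset.mem_Icc.mp hm
    have hp1 : (1 : ℚ) < p := by exact_mod_cast hp.one_lt
    have h0 : (0 : ℚ) < (p : ℚ)⁻¹ := by positivity
    have hlt : (p : ℚ)⁻¹ ^ m < 1 :=
      pow_lt_one₀ (le_of_lt h0) (inv_lt_one_of_one_lt₀ hp1) (by omega)
    exact ne_of_gt (by linarith)
  refine ⟨?_, part2⟩
  -- lower bound for λ'
  have hdlb : ∀ k, k ≤ b → Li1 < dualPart n lam k := by
    intro k hk
    have hsub : Finset.Icc 1 (Li1 + 1) ⊆ (Finset.Icc 1 n).filter (fun j => k ≤ lam j) := by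
      intro j hj
      obtain ⟨h1, h2⟩ := Finset.mem_Icc.mp hj
      exact Finset.mem_filter.2 ⟨Finset.mem_Icc.2 ⟨h1, by omega⟩,
        le_trans hk (lam_anti j (Li1 + 1) h1 h2)⟩
    have hcard := Finset.card_le_card hsub
    rw [Nat.card_Icc] at hcard
    unfold dualPart
    omega
  -- sum of λ' over the k-range
  have hsum : ∑ k ∈ Finset.Icc (a + 1) b, dualPart n lam k
      = Li1 * (b - a) + ∑ j ∈ Finset.Icc 1 d, (lam (Li1 + j) - a) := by
    unfold dualPart
    have step1 : ∀ k, ((Finset.Icc 1 n).filter fun j => k ≤ lam j).card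
        = ∑ j ∈ Finset.Icc 1 n, if k ≤ lam j then 1 else 0 := fun k => by
      rw [Finset.card_filter]
    simp only [step1]
    rw [Finset.sum_comm]
    have inner : ∀ j, (∑ k ∈ Finset.Icc (a + 1) b, if k ≤ lam j then 1 else 0)
        = min b (lam j) - a := by
      intro j
      rw [← Finset.card_filter]
      have hfe : (Finset.Icc (a + 1) b).filter (fun k => k ≤ lam j)
          = Finset.Icc (a + 1) (min b (lam j)) := by
        ext k
        simp only [Finset.mem_filter, Finset.mem_Icc]
        omega
      rw [hfe, Nat.card_Icc]
      omega
    simp only [inner]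
    have e1 : Finset.Icc 1 n = Finset.Ioc 0 n := by ext x; simp; omega
    rw [e1, ← Finset.sum_Ioc_consecutive _ (Nat.zero_le Li) hLin,
      ← Finset.sum_Ioc_consecutive _ (Nat.zero_le Li1) (le_of_lt hLi1Li)]
    have p1 : ∑ j ∈ Finset.Ioc 0 Li1, (min b (lam j) - a) = Li1 * (b - a) := by
      have hcongr : ∀ j ∈ Finset.Ioc 0 Li1, min b (lam j) - a = b - a := by
        intro j hj
        obtain ⟨h1, h2⟩ := Finset.mem_Ioc.mp hj
        have : b ≤ lam j := lam_anti j (Li1 + 1) h1 (by omega)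
        omega
      rw [Finset.sum_congr rfl hcongr, Finset.sum_const, Nat.card_Ioc, smul_eq_mul]
      simp
    have p3 : ∑ j ∈ Finset.Ioc Li n, (min b (lam j) - a) = 0 := by
      apply Finset.sum_eq_zero
      intro j hj
      have := hlam_ub j (Finset.mem_Ioc.mp hj).1
      omega
    have p2 : ∑ j ∈ Finset.Ioc Li1 Li, (min b (lam j) - a)
        = ∑ j ∈ Finset.Icc 1 d, (lam (Li1 + j) - a) := by
      have hmap : Finset.Ioc Li1 Li = Finset.map (addLeftEmbedding Li1) (Finset.Icc 1 d) := by
        rw [Finset.map_add_left_Icc]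
        ext x
        simp only [Finset.mem_Ioc, Finset.mem_Icc]
        omega
      rw [hmap, Finset.sum_map]
      apply Finset.sum_congr rfl
      intro j hj
      obtain ⟨h1, h2⟩ := Finset.mem_Icc.mp hj
      have := hlam_mid (Li1 + j) (by omega) (by omega)
      simp only [addLeftEmbedding_apply]
      omega
    rw [p1, p2, p3]
    omega
  -- values of ss
  have hss_lt : ∀ j, 1 ≤ j → j < d → ss (Li1 + j) = lam (Li1 + j) - lam (Li1 + j + 1) := by
    intro j h1 h2
    apply hss1 _ (Finset.mem_Icc.2 ⟨by omega, by omega⟩)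
    intro i' hi'
    obtain ⟨h1', h2'⟩ := Finset.mem_Icc.mp hi'
    rcases Nat.lt_or_ge i' i with h | h
    · have hle' : L i' ≤ Li1 := by
        rcases Nat.lt_or_ge i' (i - 1) with h'' | h''
        · exact le_of_lt (hLs i' (i - 1) h'' (by omega))
        · have : i' = i - 1 := by omega
          rw [hLi1, this]
      omega
    · have hge' : Li ≤ L i' := by
        rcases Nat.lt_or_ge i i' with h'' | h''
        · exact le_of_lt (hLs i i' h'' h2')
        · have : i' = i := by omega
          rw [hLi, this]
      omega
  have hss_d : ss Li = lam Li - a := hss2 i (Finset.mem_Icc.2 ⟨hi1, hiir⟩)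
  -- the combinatorial key identity
  have key : ∑ k ∈ Finset.Icc (a + 1) b, Mi * (dualPart n lam k - Mi)
      = ∑ j ∈ Finset.Icc 1 d, Mi * (Li1 - Mi + j) * ss (Li1 + j) := by
    have hB : ∀ B : ℕ → ℤ, (∀ j, j ≤ d → B j = (lam (Li1 + j) : ℤ)) →
        (B (d + 1) = (a : ℤ)) → True := fun _ _ _ => trivial
    set B : ℕ → ℤ := fun j => if j ≤ d then (lam (Li1 + j) : ℤ) else (a : ℤ) with hBdef
    have hssZ : ∀ j ∈ Finset.Icc 1 d, (ss (Li1 + j) : ℤ) = B j - B (j + 1) := by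
      intro j hj
      obtain ⟨h1, h2⟩ := Finset.mem_Icc.mp hj
      rcases Nat.lt_or_ge j d with h | h
      · have hmon : lam (Li1 + j + 1) ≤ lam (Li1 + j) := hlam.1 _ (by omega)
        rw [hss_lt j h1 h, Nat.cast_sub hmon]
        simp only [hBdef]
        rw [if_pos h2, if_pos (by omega : j + 1 ≤ d)]
        norm_num [show Li1 + (j + 1) = Li1 + j + 1 from by omega]
      · have hjd : j = d := by omega
        subst hjd
        have hLid : Li1 + d = Li := by omega
        rw [hLid, hss_d, Nat.cast_sub hw1i]
        simp only [hBdef]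
        rw [if_pos le_rfl, if_neg (by omega : ¬ d + 1 ≤ d), hLid]
    have hsumZ : (∑ k ∈ Finset.Icc (a + 1) b, (dualPart n lam k : ℤ))
        = Li1 * ((b : ℤ) - a) + ∑ j ∈ Finset.Icc 1 d, ((lam (Li1 + j) : ℤ) - a) := by
      have hc := congrArg (Nat.cast : ℕ → ℤ) hsum
      rw [Nat.cast_sum] at hc
      rw [hc, Nat.cast_add, Nat.cast_mul, Nat.cast_sub hba, Nat.cast_sum]
      congr 1
      apply Finset.sum_congr rfl
      intro j hj
      obtain ⟨h1, h2⟩ := Finset.mem_Icc.mp hj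
      rw [Nat.cast_sub (hlam_mid (Li1 + j) (by omega) (by omega)).1]
    have hLZ : ((∑ k ∈ Finset.Icc (a + 1) b, Mi * (dualPart n lam k - Mi) : ℕ) : ℤ)
        = (Mi : ℤ) * ((∑ k ∈ Finset.Icc (a + 1) b, (dualPart n lam k : ℤ))
            - ((b : ℤ) - a) * Mi) := by
      have hcongr : ∀ k ∈ Finset.Icc (a + 1) b, ((Mi * (dualPart n lam k - Mi) : ℕ) : ℤ)
          = (Mi : ℤ) * (dualPart n lam k : ℤ) - (Mi : ℤ) * Mi := by
        intro k hk
        have := hdlb k (Finset.mem_Icc.mp hk).2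
        push_cast [Nat.cast_sub (by omega : Mi ≤ dualPart n lam k)]
        ring
      rw [Nat.cast_sum, Finset.sum_congr rfl hcongr, Finset.sum_sub_distrib,
        Finset.sum_const, Nat.card_Icc, nsmul_eq_mul, ← Finset.mul_sum]
      have hcc : ((b + 1 - (a + 1) : ℕ) : ℤ) = (b : ℤ) - a := by omega
      rw [hcc]
      ring
    have hRZ : ((∑ j ∈ Finset.Icc 1 d, Mi * (Li1 - Mi + j) * ss (Li1 + j) : ℕ) : ℤ)
        = (Mi : ℤ) * (((Li1 : ℤ) - Mi) * B 1 + ∑ j ∈ Finset.Icc 1 d, B j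
            - ((Li1 : ℤ) - Mi + d) * B (d + 1)) := by
      rw [Nat.cast_sum, ← birkhoff_tele B ((Li1 : ℤ) - Mi) d, Finset.mul_sum]
      apply Finset.sum_congr rfl
      intro j hj
      rw [← hssZ j hj]
      push_cast [Nat.cast_sub hMiLi1]
      ring
    have hB1 : B 1 = (b : ℤ) := by
      simp only [hBdef]
      rw [if_pos (by omega : 1 ≤ d)]
    have hBd1 : B (d + 1) = (a : ℤ) := by
      simp only [hBdef]
      rw [if_neg (by omega : ¬ d + 1 ≤ d)]
    have hBsum : ∑ j ∈ Finset.Icc 1 d, B j = ∑ j ∈ Finset.Icc 1 d, ((lam (Li1 + j) : ℤ) - a)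
        + d * a := by
      have h1 : ∑ j ∈ Finset.Icc 1 d, B j = ∑ j ∈ Finset.Icc 1 d, (lam (Li1 + j) : ℤ) := by
        apply Finset.sum_congr rfl
        intro j hj
        simp only [hBdef]
        rw [if_pos (Finset.mem_Icc.mp hj).2]
      rw [h1, Finset.sum_sub_distrib, Finset.sum_const, Nat.card_Icc, nsmul_eq_mul]
      have hdd : ((d + 1 - 1 : ℕ) : ℤ) = (d : ℤ) := by omega
      rw [hdd]
      ring
    have : ((∑ k ∈ Finset.Icc (a + 1) b, Mi * (dualPart n lam k - Mi) : ℕ) : ℤ)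
        = ((∑ j ∈ Finset.Icc 1 d, Mi * (Li1 - Mi + j) * ss (Li1 + j) : ℕ) : ℤ) := by
      rw [hLZ, hRZ, hsumZ, hB1, hBd1, hBsum]
      ring
    exact_mod_cast this
  -- assemble part 1
  calc ∏ k ∈ Finset.Icc (a + 1) b,
        ((p : ℚ) ^ (dualPart n mu k * (dualPart n lam k - dualPart n mu k)) *
          gaussBinom ((p : ℚ)⁻¹) (dualPart n lam k - dualPart n mu (k + 1))
            (dualPart n lam k - dualPart n mu k))
      = ∏ k ∈ Finset.Icc (a + 1) b, (p : ℚ) ^ (Mi * (dualPart n lam k - Mi)) := by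
        apply Finset.prod_congr rfl
        intro k hk
        obtain ⟨hk1, hk2⟩ := Finset.mem_Icc.mp hk
        rw [part2 k hk, mul_one, hmu_dual k hk1 (by omega)]
    _ = (p : ℚ) ^ (∑ k ∈ Finset.Icc (a + 1) b, Mi * (dualPart n lam k - Mi)) :=
        Finset.prod_pow_eq_pow_sum _ _ _
    _ = (p : ℚ) ^ (∑ j ∈ Finset.Icc 1 d, Mi * (Li1 - Mi + j) * ss (Li1 + j)) := by rw [key]
    _ = ∏ j ∈ Finset.Icc 1 d, (p : ℚ) ^ (Mi * (Li1 - Mi + j) * ss (Li1 + j)) :=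
        (Finset.prod_pow_eq_pow_sum _ _ _).symm
end

section
/- Let λ be a partition with at most n parts and let β(λ) = #{ℓ ∈ ℕ_0^n : rearranging ℓ in non-increasing order yields λ}. Then β(λ) = binom(n, 𝒥(λ)), where 𝒥(λ) = {j ∈ {1,…,n−1} : λ_j > λ_{j+1}}. Moreover, if μ ≤ λ is a partition with w(μ,λ) = w for a Dyck word w of length 2n with parameters r, L_0,…,L_r, M_0,…,M_r and ℒ = {L_1,…,L_{r−1}}, then β(λ) = binom(n, ℒ) · ∏_{i=1}^r binom(L_i−L_{i−1}, J_i^λ). -/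
section AuxProof

open Finset

/-! ### Multinomial list lemmas -/

lemma multinomAux_append_cons (l1 l2 : List ℕ) (a n : ℕ) :
    multinomAux n (l1 ++ a :: l2) = multinomAux n (l1 ++ [a]) * multinomAux a l2 := by
  induction l1 generalizing n with
  | nil => simp [multinomAux, mul_assoc]
  | cons i l ih => simp [multinomAux, ih, mul_assoc]

lemma multinomAux_append_zero (l : List ℕ) (n : ℕ) :
    multinomAux n (l ++ [0]) = multinomAux n l := by
  induction l generalizing n with
  | nil => simp [multinomAux]
  | cons i l ih => simp [multinomAux, ih]

lemma choose_mul_choose_id {b y c : ℕ} (hcy : c ≤ y) (hyb : y ≤ b) :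
    b.choose y * y.choose c = b.choose c * (b - c).choose (b - y) := by
  have h1 := Nat.choose_mul_factorial_mul_factorial hcy
  have h2 := Nat.choose_mul_factorial_mul_factorial hyb
  have hcb : c ≤ b := hcy.trans hyb
  have h4 := Nat.choose_mul_factorial_mul_factorial hcb
  have h5 : b - y ≤ b - c := by omega
  have h3 := Nat.choose_mul_factorial_mul_factorial h5
  have he : b - c - (b - y) = y - c := by omega
  rw [he] at h3
  have hK : 0 < c.factorial * ((y - c).factorial * (b - y).factorial) :=
    Nat.mul_pos c.factorial_pos (Nat.mul_pos (Nat.factorial_pos _) (Nat.factorial_pos _))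
  apply Nat.eq_of_mul_eq_mul_right hK
  calc b.choose y * y.choose c * (c.factorial * ((y - c).factorial * (b - y).factorial))
      = (y.choose c * c.factorial * (y - c).factorial) * (b.choose y * (b - y).factorial) := by
        ring
    _ = y.factorial * (b.choose y * (b - y).factorial) := by rw [h1]
    _ = b.choose y * y.factorial * (b - y).factorial := by ring
    _ = b.factorial := h2
    _ = b.choose c * c.factorial * (b - c).factorial := h4.symm
    _ = b.choose c * c.factorial *
        ((b - c).choose (b - y) * (b - y).factorial * (y - c).factorial) := by rw [h3]
    _ = b.choose c * (b - c).choose (b - y) *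
        (c.factorial * ((y - c).factorial * (b - y).factorial)) := by ring

/-! ### Sorted list lemmas -/

lemma sort_union_of_lt (A B : Finset ℕ) (h : ∀ x ∈ A, ∀ y ∈ B, x < y) :
    (A ∪ B).sort (· ≤ ·) = A.sort (· ≤ ·) ++ B.sort (· ≤ ·) := by
  refine (fun hp h1 h2 => List.Perm.eq_of_pairwise' (r := (· ≤ ·)) h1 h2 hp) ?_ ?_ ?_
  · apply List.perm_of_nodup_nodup_toFinset_eq (Finset.sort_nodup _ _)
    · rw [List.nodup_append]
      refine ⟨Finset.sort_nodup _ _, Finset.sort_nodup _ _, ?_⟩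
      intro x hx y hx' hxy; subst hxy
      exact lt_irrefl x (h x (by simpa using hx) x (by simpa using hx'))
    · rw [List.toFinset_append, Finset.sort_toFinset, Finset.sort_toFinset,
        Finset.sort_toFinset]
  · exact Finset.pairwise_sort _ _
  · rw [List.pairwise_append]
    refine ⟨Finset.pairwise_sort _ _, Finset.pairwise_sort _ _, ?_⟩
    intro x hx y hy
    exact le_of_lt (h x (by simpa using hx) y (by simpa using hy))

lemma sort_reverse_sorted_gt (s : Finset ℕ) :
    List.Pairwise (· > ·) ((s.sort (· ≤ ·)).reverse) := by
  rw [List.pairwise_reverse]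
  exact (Finset.sortedLT_sort s).pairwise

lemma sort_image_sub_reverse (U : Finset ℕ) (b : ℕ) (hU : ∀ x ∈ U, x ≤ b) :
    ((U.image (fun d => b - d)).sort (· ≤ ·)).reverse =
      (U.sort (· ≤ ·)).map (fun d => b - d) := by
  have key : (U.image (fun d => b - d)).sort (· ≤ ·) =
      ((U.sort (· ≤ ·)).map (fun d => b - d)).reverse := by
    refine (fun hp h1 h2 => List.Perm.eq_of_pairwise' (r := (· ≤ ·)) h1 h2 hp) ?_ ?_ ?_
    · apply List.perm_of_nodup_nodup_toFinset_eq (Finset.sort_nodup _ _)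
      · rw [List.nodup_reverse]
        apply List.Nodup.map_on ?_ (Finset.sort_nodup _ _)
        intro x hx y hy hxy
        have hx' := hU x (by simpa using hx)
        have hy' := hU y (by simpa using hy)
        omega
      · ext x
        simp
    · exact Finset.pairwise_sort _ _
    · rw [List.pairwise_reverse, List.pairwise_map]
      apply List.Pairwise.imp ?_ (Finset.pairwise_sort U (· ≤ ·))
      intro a c hac
      show b - c ≤ b - a
      omega
  rw [key, List.reverse_reverse]

lemma multinom_insert_max (s : Finset ℕ) (a n : ℕ) (h : ∀ x ∈ s, x < a) :
    multinom n (insert a s) = n.choose a * multinom a s := by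
  have h1 : insert a s = s ∪ {a} := by
    ext x; simp [or_comm]
  rw [multinom, h1, sort_union_of_lt s {a} (by simpa using h), Finset.sort_singleton,
    List.reverse_append]
  simp [multinomAux, multinom]

/-! ### Reflection lemma for `multinomAux` -/

lemma multinomAux_reflect (l : List ℕ) (b : ℕ) : ∀ c, c ≤ b → List.Pairwise (· > ·) l →
    (∀ x ∈ l, c < x ∧ x < b) →
    multinomAux b (l ++ [c]) =
      b.choose c * multinomAux (b - c) (l.reverse.map (fun x => b - x)) := by
  induction l using List.reverseRecOn with
  | nil => intro c hcb _ _; simp [multinomAux]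
  | append_singleton l' y ih =>
    intro c hcb hs hmem
    have hy := hmem y (by simp)
    have hl' : ∀ x ∈ l', y < x := by
      intro x hx
      exact (List.pairwise_append.mp hs).2.2 x hx y (by simp)
    have hstep : multinomAux b ((l' ++ [y]) ++ [c]) =
        multinomAux b (l' ++ [y]) * multinomAux y [c] := by
      rw [List.append_assoc]
      exact multinomAux_append_cons l' [c] y b
    have hIH : multinomAux b (l' ++ [y]) =
        b.choose y * multinomAux (b - y) (l'.reverse.map (fun x => b - x)) := by
      apply ih y (le_of_lt hy.2) (List.pairwise_append.mp hs).1
      intro x hx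
      exact ⟨hl' x hx, (hmem x (by simp [hx])).2⟩
    have hmap : (l' ++ [y]).reverse.map (fun x => b - x) =
        (b - y) :: l'.reverse.map (fun x => b - x) := by
      simp
    rw [hstep, hIH, hmap]
    have hyc : multinomAux y [c] = y.choose c := by simp [multinomAux]
    rw [hyc]
    show b.choose y * multinomAux (b - y) (l'.reverse.map (fun x => b - x)) * y.choose c =
      b.choose c * ((b - c).choose (b - y) *
        multinomAux (b - y) (l'.reverse.map (fun x => b - x)))
    rw [show b.choose y * multinomAux (b - y) (l'.reverse.map (fun x => b - x)) * y.choose c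
        = (b.choose y * y.choose c) * multinomAux (b - y) (l'.reverse.map (fun x => b - x))
        from by ring,
      choose_mul_choose_id (le_of_lt hy.1) (le_of_lt hy.2)]
    ring

/-! ### The fiber product and `multinom` -/

/-- The product of factorials of the "block" sizes determined by a finite set of cuts. -/
def fiberProd (D : Finset ℕ) (N : ℕ) : ℕ :=
  ∏ b ∈ Finset.range (D.card + 1),
    (((Finset.Icc 1 N).filter (fun k => (D.filter (· < k)).card = b)).card).factorial

lemma fiberProd_pos (D : Finset ℕ) (N : ℕ) : 0 < fiberProd D N :=
  Finset.prod_pos fun _ _ => Nat.factorial_pos _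

lemma multinom_mul_fiberProd (D : Finset ℕ) :
    ∀ n, (∀ d ∈ D, 1 ≤ d ∧ d < n) → multinom n D * fiberProd D n = n.factorial := by
  induction D using Finset.induction_on_max with
  | empty =>
    intro n _
    have h1 : multinom n ∅ = 1 := by simp [multinom, multinomAux]
    have h2 : fiberProd ∅ n = n.factorial := by
      rw [fiberProd]
      simp [Finset.filter_true_of_mem, Nat.card_Icc]
    rw [h1, h2, one_mul]
  | insert a s ha ih =>
    intro n hD
    have hans : a ∉ s := fun h => lt_irrefl a (ha a h)
    have han : 1 ≤ a ∧ a < n := hD a (Finset.mem_insert_self a s)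
    have hcard : (insert a s).card = s.card + 1 := Finset.card_insert_of_notMem hans
    have hsub1 : ∀ k, k ≤ a → (insert a s).filter (· < k) = s.filter (· < k) := by
      intro k hk
      rw [Finset.filter_insert, if_neg (by omega)]
    have hsub2 : ∀ k, a < k → ((insert a s).filter (· < k)).card = s.card + 1 := by
      intro k hk
      rw [Finset.filter_insert, if_pos hk,
        Finset.filter_true_of_mem (fun x hx => lt_trans (ha x hx) hk),
        Finset.card_insert_of_notMem hans]
    have claim2 : (Finset.Icc 1 n).filter
        (fun k => ((insert a s).filter (· < k)).card = s.card + 1) = Finset.Icc (a + 1) n := by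
      ext k
      simp only [Finset.mem_filter, Finset.mem_Icc]
      constructor
      · rintro ⟨⟨h1k, hkn⟩, hc⟩
        refine ⟨?_, hkn⟩
        by_contra hak
        rw [hsub1 k (by omega)] at hc
        have := Finset.card_filter_le s (· < k)
        omega
      · rintro ⟨hak, hkn⟩
        exact ⟨⟨by omega, hkn⟩, hsub2 k (by omega)⟩
    have claim1 : ∀ b, b ≤ s.card → (Finset.Icc 1 n).filter
        (fun k => ((insert a s).filter (· < k)).card = b) =
        (Finset.Icc 1 a).filter (fun k => (s.filter (· < k)).card = b) := by
      intro b hb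
      ext k
      simp only [Finset.mem_filter, Finset.mem_Icc]
      constructor
      · rintro ⟨⟨h1k, hkn⟩, hc⟩
        have hka : k ≤ a := by
          by_contra hak
          rw [hsub2 k (by omega)] at hc
          omega
        rw [hsub1 k hka] at hc
        exact ⟨⟨h1k, hka⟩, hc⟩
      · rintro ⟨⟨h1k, hka⟩, hc⟩
        rw [hsub1 k hka]
        exact ⟨⟨h1k, by omega⟩, hc⟩
    have hFP : fiberProd (insert a s) n = fiberProd s a * (n - a).factorial := by
      rw [fiberProd, hcard, Finset.prod_range_succ, claim2, Nat.card_Icc]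
      congr 1
      · rw [fiberProd]
        apply Finset.prod_congr rfl
        intro b hb
        rw [claim1 b (by simpa using Nat.lt_succ_iff.mp (Finset.mem_range.mp hb))]
      · congr 1
        omega
    have hM : multinom n (insert a s) = n.choose a * multinom a s :=
      multinom_insert_max s a n ha
    have hIH : multinom a s * fiberProd s a = a.factorial := by
      apply ih
      intro x hx
      exact ⟨(hD x (Finset.mem_insert_of_mem hx)).1, ha x hx⟩
    calc multinom n (insert a s) * fiberProd (insert a s) n
        = n.choose a * (multinom a s * fiberProd s a) * (n - a).factorial := by
          rw [hM, hFP]; ring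
      _ = n.choose a * a.factorial * (n - a).factorial := by rw [hIH]
      _ = n.factorial := Nat.choose_mul_factorial_mul_factorial (le_of_lt han.2)

/-! ### Partitions: descents and fibers -/

lemma lam_antitone {n : ℕ} {lam : ℕ → ℕ} (hlam : IsPartition n lam) :
    ∀ j k, 1 ≤ j → j ≤ k → lam k ≤ lam j := by
  intro j k h1 hjk
  induction k, hjk using Nat.le_induction with
  | base => exact le_refl _
  | succ k hk ih => exact le_trans (hlam.1 k (le_trans h1 hk)) ih

lemma descent_fiber {n : ℕ} {lam : ℕ → ℕ} (hlam : IsPartition n lam) :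
    ∀ j k, 1 ≤ j → j ≤ n → 1 ≤ k → k ≤ n →
    (lam j = lam k ↔
      ((((Finset.Icc 1 (n - 1)).filter fun i => lam (i + 1) < lam i).filter (· < j)).card =
       (((Finset.Icc 1 (n - 1)).filter fun i => lam (i + 1) < lam i).filter (· < k)).card)) := by
  set D := (Finset.Icc 1 (n - 1)).filter fun i => lam (i + 1) < lam i with hDdef
  have hDmem : ∀ d ∈ D, 1 ≤ d ∧ d ≤ n - 1 ∧ lam (d + 1) < lam d := by
    intro d hd
    rw [hDdef, Finset.mem_filter, Finset.mem_Icc] at hd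
    exact ⟨hd.1.1, hd.1.2, hd.2⟩
  have fwd : ∀ j k, 1 ≤ j → j ≤ k → lam j = lam k →
      (D.filter (· < j)).card = (D.filter (· < k)).card := by
    intro j k h1 hjk heq
    congr 1
    ext d
    simp only [Finset.mem_filter]
    constructor
    · rintro ⟨hd, hdj⟩; exact ⟨hd, by omega⟩
    · rintro ⟨hd, hdk⟩
      refine ⟨hd, ?_⟩
      by_contra hjd
      have h2 := hDmem d hd
      have h3 : lam d ≤ lam j := lam_antitone hlam j d h1 (by omega)
      have h4 : lam k ≤ lam (d + 1) := lam_antitone hlam (d + 1) k (by omega) (by omega)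
      omega
  have bwd : ∀ j k, 1 ≤ j → j ≤ k → k ≤ n →
      (D.filter (· < j)).card = (D.filter (· < k)).card → lam j = lam k := by
    intro j k h1 hjk
    induction k, hjk using Nat.le_induction with
    | base => intro _ _; rfl
    | succ k hk ih =>
      intro hkn hc
      have hmono1 : D.filter (· < k) ⊆ D.filter (· < k + 1) := by
        intro x hx
        rw [Finset.mem_filter] at hx ⊢
        exact ⟨hx.1, by omega⟩
      have hmono0 : D.filter (· < j) ⊆ D.filter (· < k) := by
        intro x hx
        rw [Finset.mem_filter] at hx ⊢
        exact ⟨hx.1, by omega⟩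
      have hc1 : (D.filter (· < j)).card = (D.filter (· < k)).card := by
        have := Finset.card_le_card hmono1
        have := Finset.card_le_card hmono0
        omega
      have hjk' : lam j = lam k := ih (by omega) hc1
      have hfeq : D.filter (· < k) = D.filter (· < k + 1) :=
        Finset.eq_of_subset_of_card_le hmono1 (by omega)
      have hkD : k ∉ D := by
        intro hkD
        have h5 : k ∈ D.filter (· < k + 1) := Finset.mem_filter.mpr ⟨hkD, by omega⟩
        rw [← hfeq] at h5
        have := (Finset.mem_filter.mp h5).2
        omega
      have hk1 : lam k = lam (k + 1) := by
        have h6 : ¬ lam (k + 1) < lam k := by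
          intro h7
          exact hkD (Finset.mem_filter.mpr ⟨Finset.mem_Icc.mpr ⟨by omega, by omega⟩, h7⟩)
        have h8 := hlam.1 k (by omega)
        omega
      omega
  intro j k h1j hjn h1k hkn
  rcases le_total j k with h | h
  · exact ⟨fun he => fwd j k h1j h he, fun hc => bwd j k h1j h hkn hc⟩
  · exact ⟨fun he => (fwd k j h1k h he.symm).symm, fun hc => (bwd k j h1k h hjn hc.symm).symm⟩

/-! ### Part 1: `betaCount` via orbit-stabilizer -/

lemma card_filter_fin_succ (n : ℕ) (P : ℕ → Prop) [DecidablePred P] :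
    (Finset.univ.filter (fun a : Fin n => P (a.1 + 1))).card =
      ((Finset.Icc 1 n).filter P).card := by
  apply Finset.card_bij (fun (a : Fin n) _ => a.1 + 1)
  · intro a haP
    simp only [Finset.mem_filter, Finset.mem_univ, true_and] at haP
    simp only [Finset.mem_filter, Finset.mem_Icc]
    exact ⟨⟨by omega, a.2⟩, haP⟩
  · intro a _ b _ hab
    ext
    omega
  · intro k hk
    simp only [Finset.mem_filter, Finset.mem_Icc] at hk
    refine ⟨⟨k - 1, by omega⟩, ?_, by simp only [Fin.val_mk]; omega⟩
    simp only [Finset.mem_filter, Finset.mem_univ, true_and]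
    have : k - 1 + 1 = k := by omega
    rw [this]
    exact hk.2

lemma betaCount_eq_multinom_descents (n : ℕ) (lam : ℕ → ℕ) (hlam : IsPartition n lam) :
    betaCount n lam =
      multinom n ((Finset.Icc 1 (n - 1)).filter fun j => lam (j + 1) < lam j) := by
  classical
  set D := (Finset.Icc 1 (n - 1)).filter (fun j => lam (j + 1) < lam j) with hDdef
  set L : Fin n → ℕ := fun j => lam (j.1 + 1) with hLdef
  set G := (Equiv.Perm (Fin n))ᵈᵐᵃ
  set c2 : Fin n → Fin (D.card + 1) := fun a =>
    ⟨(D.filter (· < a.1 + 1)).card, Nat.lt_succ_of_le (Finset.card_filter_le _ _)⟩ with hc2def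
  -- betaCount is the cardinality of the orbit of L
  have h1 : betaCount n lam = Nat.card (MulAction.orbit G L) := by
    rw [betaCount]
    apply Nat.card_congr
    apply Equiv.subtypeEquivRight
    intro ℓ
    rw [MulAction.mem_orbit_iff]
    constructor
    · rintro ⟨σ, hσ⟩
      refine ⟨DomMulAct.mk σ⁻¹, funext fun j => ?_⟩
      rw [DomMulAct.smul_apply, Equiv.symm_apply_apply]
      have := hσ (σ⁻¹ j)
      simp only [Equiv.Perm.coe_inv, Equiv.apply_symm_apply] at this
      rw [Equiv.Perm.smul_def]
      exact this.symm
    · rintro ⟨g, hg⟩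
      refine ⟨(DomMulAct.mk.symm g)⁻¹, fun j => ?_⟩
      rw [← hg, DomMulAct.smul_apply, Equiv.Perm.smul_def, Equiv.Perm.coe_inv, Equiv.apply_symm_apply]
  -- orbit-stabilizer
  have h2 : Nat.card (MulAction.orbit G L) * Nat.card (MulAction.stabilizer G L) =
      n.factorial := by
    rw [← Nat.card_prod]
    rw [Nat.card_congr (MulAction.orbitProdStabilizerEquivGroup G L)]
    rw [Nat.card_congr DomMulAct.mk.symm]
    simp [Nat.card_eq_fintype_card, Fintype.card_perm]
  -- the stabilizer has cardinality fiberProd D n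
  have h3 : Nat.card (MulAction.stabilizer G L) = fiberProd D n := by
    have e1 : {σ : Equiv.Perm (Fin n) // L ∘ σ = L} ≃ MulAction.stabilizer G L := by
      apply Equiv.subtypeEquiv (DomMulAct.mk : Equiv.Perm (Fin n) ≃ G)
      intro σ
      rw [DomMulAct.mem_stabilizer_iff, Equiv.symm_apply_apply]
    have e2 : {σ : Equiv.Perm (Fin n) // L ∘ σ = L} ≃
        {σ : Equiv.Perm (Fin n) // c2 ∘ σ = c2} := by
      apply Equiv.subtypeEquivRight
      intro σ
      rw [funext_iff, funext_iff]
      apply forall_congr'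
      intro a
      have hkey := descent_fiber hlam ((σ a).1 + 1) (a.1 + 1)
        (by omega) (by have := (σ a).2; omega) (by omega) (by have := a.2; omega)
      simp only [Function.comp_apply]
      constructor
      · intro h
        have : (D.filter (· < (σ a).1 + 1)).card = (D.filter (· < a.1 + 1)).card :=
          hkey.mp h
        rw [hc2def]
        exact Fin.ext this
      · intro h
        apply hkey.mpr
        simpa [hc2def, Fin.ext_iff] using h
    rw [← Nat.card_congr e1, Nat.card_congr e2, Nat.card_eq_fintype_card,
      DomMulAct.stabilizer_card c2, fiberProd]
    rw [← Fin.prod_univ_eq_prod_range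
      (fun b => (((Finset.Icc 1 n).filter (fun k => (D.filter (· < k)).card = b)).card).factorial)
      (D.card + 1)]
    apply Finset.prod_congr rfl
    intro i _
    congr 1
    rw [Fintype.card_subtype]
    rw [← card_filter_fin_succ n (fun k => (D.filter (· < k)).card = i.1)]
    congr 1
    apply Finset.filter_congr
    intro a _
    rw [hc2def, Fin.ext_iff]
  -- conclude
  have h4 : multinom n D * fiberProd D n = n.factorial := by
    apply multinom_mul_fiberProd
    intro d hd
    rw [hDdef, Finset.mem_filter, Finset.mem_Icc] at hd
    omega
  have h5 : betaCount n lam * fiberProd D n = n.factorial := by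
    rw [h1, ← h3, h2]
  exact Nat.eq_of_mul_eq_mul_right (fiberProd_pos D n) (by rw [h5, h4])

/-! ### Part 2: block decomposition of `multinom` -/

lemma strictMono_of_steps (s : ℕ → ℕ) (R : ℕ) (hstep : ∀ i, 1 ≤ i → i ≤ R → s (i - 1) < s i) :
    ∀ i j, i < j → j ≤ R → s i < s j := by
  intro i j hij hjR
  induction j, hij using Nat.le_induction with
  | base =>
    have := hstep (i + 1) (by omega) (by omega)
    simpa using this
  | succ j hj ih =>
    have h1 := hstep (j + 1) (by omega) (by omega)
    have h2 : s i < s j := ih (by omega)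
    simpa using lt_trans h2 h1

lemma multinom_block_decomp : ∀ r, 1 ≤ r → ∀ (n : ℕ) (s : ℕ → ℕ) (D : Finset ℕ),
    s 0 = 0 → s r = n → (∀ i, 1 ≤ i → i ≤ r → s (i - 1) < s i) →
    (∀ d ∈ D, 1 ≤ d ∧ d < n) → (∀ i, 1 ≤ i → i ≤ r - 1 → s i ∈ D) →
    multinom n D = multinom n ((Finset.Icc 1 (r - 1)).image s) *
      ∏ i ∈ Finset.Icc 1 r, multinom (s i - s (i - 1))
        ((D.filter (fun d => s (i - 1) < d ∧ d < s i)).image (fun d => s i - d)) := by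
  intro r hr
  induction r, hr using Nat.le_induction with
  | base =>
    intro n s D h0 h1 _ hD _
    have hIcc : Finset.Icc 1 (1 - 1) = (∅ : Finset ℕ) := by decide
    rw [hIcc, Finset.image_empty]
    have hM1 : multinom n (∅ : Finset ℕ) = 1 := by simp [multinom, multinomAux]
    rw [hM1, one_mul, Finset.Icc_self, Finset.prod_singleton, h0, h1]
    have hfil : D.filter (fun d => 0 < d ∧ d < n) = D := by
      apply Finset.filter_true_of_mem
      intro d hd
      have := hD d hd
      omega
    rw [hfil, Nat.sub_zero]
    -- reflection
    have hrefl := multinomAux_reflect ((D.sort (· ≤ ·)).reverse) n 0 (Nat.zero_le n)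
      (sort_reverse_sorted_gt D) ?_
    · rw [multinom, ← multinomAux_append_zero ((D.sort (· ≤ ·)).reverse) n, hrefl,
        Nat.choose_zero_right, one_mul, Nat.sub_zero, List.reverse_reverse, multinom,
        sort_image_sub_reverse D n (fun x hx => le_of_lt (hD x hx).2)]
    · intro x hx
      rw [List.mem_reverse, Finset.mem_sort] at hx
      have := hD x hx
      omega
  | succ r hr ih =>
    intro n s D h0 hTop hstep hD hmem
    set a := s r with hadef
    have haD : a ∈ D := hmem r hr (by omega)
    have han : 1 ≤ a ∧ a < n := by
      refine ⟨(hD a haD).1, ?_⟩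
      have := strictMono_of_steps s (r + 1) hstep r (r + 1) (by omega) (le_refl _)
      omega
    have hwmono : ∀ i, i ≤ r → s i ≤ a := by
      intro i hi
      rcases eq_or_lt_of_le hi with h | h
      · rw [h]
      · exact le_of_lt (strictMono_of_steps s (r + 1) hstep i r h (by omega))
    set Dlo := D.filter (· < a) with hDlo
    set Dhi := D.filter (a < ·) with hDhi
    -- sorted list decomposition
    have hsplit : D = (Dlo ∪ {a}) ∪ Dhi := by
      ext d
      simp only [hDlo, hDhi, Finset.mem_union, Finset.mem_filter, Finset.mem_singleton]
      constructor
      · intro hd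
        rcases lt_trichotomy d a with h | h | h
        · exact Or.inl (Or.inl ⟨hd, h⟩)
        · exact Or.inl (Or.inr h)
        · exact Or.inr ⟨hd, h⟩
      · rintro ((⟨hd, _⟩ | rfl) | ⟨hd, _⟩) <;> first | exact hd | exact haD
    have hsort : D.sort (· ≤ ·) =
        (Dlo.sort (· ≤ ·) ++ [a]) ++ Dhi.sort (· ≤ ·) := by
      conv_lhs => rw [hsplit]
      rw [sort_union_of_lt _ _ ?_, sort_union_of_lt _ _ ?_, Finset.sort_singleton]
      · intro x hx y hy
        simp only [Finset.mem_singleton] at hy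
        rw [hDlo, Finset.mem_filter] at hx
        omega
      · intro x hx y hy
        rw [hDhi, Finset.mem_filter] at hy
        rcases Finset.mem_union.mp hx with h | h
        · rw [hDlo, Finset.mem_filter] at h; omega
        · rw [Finset.mem_singleton] at h; omega
    have hrev : (D.sort (· ≤ ·)).reverse =
        (Dhi.sort (· ≤ ·)).reverse ++ a :: (Dlo.sort (· ≤ ·)).reverse := by
      rw [hsort]
      simp
    -- split multinom
    have hm1 : multinom n D =
        multinomAux n ((Dhi.sort (· ≤ ·)).reverse ++ [a]) * multinom a Dlo := by
      rw [multinom, hrev, multinomAux_append_cons, multinom]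
    have hm2 : multinomAux n ((Dhi.sort (· ≤ ·)).reverse ++ [a]) =
        n.choose a * multinom (n - a) (Dhi.image (fun d => n - d)) := by
      rw [multinomAux_reflect ((Dhi.sort (· ≤ ·)).reverse) n a (le_of_lt han.2)
        (sort_reverse_sorted_gt Dhi) ?_]
      · rw [List.reverse_reverse, multinom,
          sort_image_sub_reverse Dhi n ?_]
        · intro x hx
          rw [hDhi, Finset.mem_filter] at hx
          exact le_of_lt (hD x hx.1).2
      · intro x hx
        rw [List.mem_reverse, Finset.mem_sort, hDhi, Finset.mem_filter] at hx
        exact ⟨hx.2, (hD x hx.1).2⟩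
    -- apply induction hypothesis to Dlo
    have hIH : multinom a Dlo = multinom a ((Finset.Icc 1 (r - 1)).image s) *
        ∏ i ∈ Finset.Icc 1 r, multinom (s i - s (i - 1))
          ((Dlo.filter (fun d => s (i - 1) < d ∧ d < s i)).image (fun d => s i - d)) := by
      apply ih a s Dlo h0 rfl
      · intro i h1i hir
        exact hstep i h1i (by omega)
      · intro d hd
        rw [hDlo, Finset.mem_filter] at hd
        exact ⟨(hD d hd.1).1, hd.2⟩
      · intro i h1i hir
        rw [hDlo, Finset.mem_filter]
        refine ⟨hmem i h1i (by omega), ?_⟩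
        exact strictMono_of_steps s (r + 1) hstep i r (by omega) (by omega)
    -- blocks of Dlo and D agree for i ≤ r
    have hblocks : ∀ i ∈ Finset.Icc 1 r,
        Dlo.filter (fun d => s (i - 1) < d ∧ d < s i) =
        D.filter (fun d => s (i - 1) < d ∧ d < s i) := by
      intro i hi
      rw [Finset.mem_Icc] at hi
      rw [hDlo, Finset.filter_filter]
      apply Finset.filter_congr
      intro d hd
      have hsa := hwmono i hi.2
      constructor
      · rintro ⟨_, h⟩; exact h
      · rintro ⟨h1, h2⟩; exact ⟨by omega, h1, h2⟩
    have hr1 : r + 1 - 1 = r := by omega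
    rw [hr1]
    have hIccr : Finset.Icc 1 r = insert r (Finset.Icc 1 (r - 1)) := by
      ext x
      simp only [Finset.mem_Icc, Finset.mem_insert]
      omega
    have hLmax : ∀ x ∈ (Finset.Icc 1 (r - 1)).image s, x < a := by
      intro x hx
      rw [Finset.mem_image] at hx
      obtain ⟨i, hi, rfl⟩ := hx
      rw [Finset.mem_Icc] at hi
      exact strictMono_of_steps s (r + 1) hstep i r (by omega) (by omega)
    have hmL : multinom n ((Finset.Icc 1 r).image s) =
        n.choose a * multinom a ((Finset.Icc 1 (r - 1)).image s) := by
      rw [hIccr, Finset.image_insert, multinom_insert_max _ _ _ hLmax]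
    have hprod : ∏ i ∈ Finset.Icc 1 (r + 1), multinom (s i - s (i - 1))
          ((D.filter (fun d => s (i - 1) < d ∧ d < s i)).image (fun d => s i - d)) =
        (∏ i ∈ Finset.Icc 1 r, multinom (s i - s (i - 1))
          ((D.filter (fun d => s (i - 1) < d ∧ d < s i)).image (fun d => s i - d))) *
        multinom (n - a) (Dhi.image (fun d => n - d)) := by
      rw [Finset.prod_Icc_succ_top (by omega : 1 ≤ r + 1)]
      congr 1
      rw [hr1, hTop, ← hadef]
      congr 1
      rw [hDhi]
      congr 1
      apply Finset.filter_congr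
      intro d hd
      have hdn := (hD d hd).2
      constructor
      · rintro ⟨h1, _⟩; exact h1
      · intro h1; exact ⟨h1, by omega⟩
    have hP : ∏ i ∈ Finset.Icc 1 r, multinom (s i - s (i - 1))
          ((Dlo.filter (fun d => s (i - 1) < d ∧ d < s i)).image (fun d => s i - d)) =
        ∏ i ∈ Finset.Icc 1 r, multinom (s i - s (i - 1))
          ((D.filter (fun d => s (i - 1) < d ∧ d < s i)).image (fun d => s i - d)) := by
      apply Finset.prod_congr rfl
      intro i hi
      rw [hblocks i hi]
    rw [hm1, hm2, hIH, hmL, hprod, hP]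
    ring

end AuxProof

/-- `β(λ) = binom(n, 𝒥(λ))` where `𝒥(λ) = {j ∈ {1,…,n-1} : λ_j > λ_{j+1}}`; moreover, if
`μ ≤ λ` with `w(μ,λ) = w` for a Dyck word `w` with parameters `(r, L, M)` and
`ℒ = {L_1,…,L_{r-1}}`, then `β(λ) = binom(n,ℒ) · ∏_{i=1}^r binom(L_i-L_{i-1}, J_i^λ)`. -/
theorem betaCount_eq_multinom (n : ℕ) (lam : ℕ → ℕ) (hlam : IsPartition n lam) :
    betaCount n lam =
        multinom n ((Finset.Icc 1 (n - 1)).filter fun j => lam (j + 1) < lam j) ∧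
      ∀ (r : ℕ) (L M mu : ℕ → ℕ), DyckParams n r L M → IsPartition n mu →
        (∀ j, mu j ≤ lam j) → WMatch r L M mu lam →
        betaCount n lam =
          multinom n ((Finset.Icc 1 (r - 1)).image L) *
            ∏ i ∈ Finset.Icc 1 r,
              multinom (L i - L (i - 1))
                ((Finset.Icc 1 (L i - L (i - 1) - 1)).filter
                  fun j => lam (L i - j + 1) < lam (L i - j)) := by
  classical
  have part1 := betaCount_eq_multinom_descents n lam hlam
  refine ⟨part1, ?_⟩
  intro r L M mu hDy hmu hle hW
  obtain ⟨hr, hL0, hM0, hLr, hMr, hsteps⟩ := hDy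
  have hstepL : ∀ i, 1 ≤ i → i ≤ r → L (i - 1) < L i := fun i h1 h2 =>
    (hsteps i (Finset.mem_Icc.mpr ⟨h1, h2⟩)).1
  have hstepM : ∀ i, 1 ≤ i → i ≤ r → M (i - 1) < M i := fun i h1 h2 =>
    (hsteps i (Finset.mem_Icc.mpr ⟨h1, h2⟩)).2.1
  set D := (Finset.Icc 1 (n - 1)).filter (fun j => lam (j + 1) < lam j) with hDdef
  have hD : ∀ d ∈ D, 1 ≤ d ∧ d < n := by
    intro d hd
    rw [hDdef, Finset.mem_filter, Finset.mem_Icc] at hd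
    omega
  have hLmem : ∀ i, 1 ≤ i → i ≤ r - 1 → L i ∈ D := by
    intro i h1 h2
    have hLpos : 0 < L i := by
      have := strictMono_of_steps L r hstepL 0 i (by omega) (by omega)
      omega
    have hLlt : L i < n := by
      have := strictMono_of_steps L r hstepL i r (by omega) (le_refl r)
      omega
    have hdesc : lam (L i + 1) < lam (L i) := by
      have h3 : lam (L i + 1) < mu (M i) := hW.2 i (Finset.mem_Icc.mpr ⟨h1, h2⟩)
      have h4 : mu (M i) ≤ mu (M (i - 1) + 1) := by
        apply lam_antitone hmu (M (i - 1) + 1) (M i) (by omega)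
        have := hstepM i h1 (by omega)
        omega
      have h5 : mu (M (i - 1) + 1) ≤ lam (L i) :=
        hW.1 i (Finset.mem_Icc.mpr ⟨h1, by omega⟩)
      omega
    rw [hDdef, Finset.mem_filter, Finset.mem_Icc]
    exact ⟨⟨by omega, by omega⟩, hdesc⟩
  rw [part1, multinom_block_decomp r hr n L D hL0 hLr hstepL hD hLmem]
  congr 1
  apply Finset.prod_congr rfl
  intro i hi
  rw [Finset.mem_Icc] at hi
  have hLstep : L (i - 1) < L i := hstepL i hi.1 hi.2
  have hLin : L i ≤ n := by
    rcases eq_or_lt_of_le hi.2 with h | h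
    · rw [h, hLr]
    · have := strictMono_of_steps L r hstepL i r h (le_refl r)
      omega
  congr 1
  ext j
  simp only [Finset.mem_image, Finset.mem_filter, Finset.mem_Icc]
  constructor
  · rintro ⟨d, ⟨hdD, hd1, hd2⟩, rfl⟩
    have hdmem : (1 ≤ d ∧ d ≤ n - 1) ∧ lam (d + 1) < lam d := by
      rw [hDdef, Finset.mem_filter, Finset.mem_Icc] at hdD
      exact hdD
    have he : L i - (L i - d) = d := by omega
    rw [he]
    exact ⟨⟨by omega, by omega⟩, hdmem.2⟩
  · rintro ⟨⟨hj1, hj2⟩, hdesc⟩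
    refine ⟨L i - j, ⟨?_, by omega, by omega⟩, by omega⟩
    rw [hDdef, Finset.mem_filter, Finset.mem_Icc]
    exact ⟨⟨by omega, by omega⟩, hdesc⟩
end

section
/- For every h ∈ ℕ, the generalized Igusa function satisfies the functional equation I^wo_h((X_𝓘^{−1})_𝓘) = (−1)^h · X_{{1,…,h}} · I^wo_h((X_𝓘)_𝓘) in the field of rational functions over ℚ in the 2^h − 1 variables X_𝓘. -/
section ChainAux

open Finset

variable {R : Type*} [CommRing R]

/-- Sets strictly between `A` and `B`. -/
def between (A B : Finset ℕ) : Finset (Finset ℕ) :=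
  B.powerset.filter fun J => A ⊂ J ∧ J ⊂ B

/-- Chains of sets strictly between `A` and `B`. -/
def iChains (A B : Finset ℕ) : Finset (Finset (Finset ℕ)) :=
  (between A B).powerset.filter fun C => ∀ I ∈ C, ∀ J ∈ C, I ⊆ J ∨ J ⊆ I

lemma mem_between {A B J : Finset ℕ} : J ∈ between A B ↔ A ⊂ J ∧ J ⊂ B := by
  simp only [between, mem_filter, mem_powerset]
  exact ⟨fun h => h.2, fun h => ⟨h.2.subset, h⟩⟩

lemma mem_iChains {A B : Finset ℕ} {C : Finset (Finset ℕ)} :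
    C ∈ iChains A B ↔ C ⊆ between A B ∧ ∀ I ∈ C, ∀ J ∈ C, I ⊆ J ∨ J ⊆ I := by
  simp [iChains, mem_filter, mem_powerset]

lemma empty_mem_iChains (A B : Finset ℕ) : (∅ : Finset (Finset ℕ)) ∈ iChains A B := by
  simp [mem_iChains]

noncomputable def minElt (C : Finset (Finset ℕ)) : Finset ℕ :=
  if h : C.Nonempty then (C.exists_min_image Finset.card h).choose else ∅

lemma minElt_spec {C : Finset (Finset ℕ)} (h : C.Nonempty) :
    minElt C ∈ C ∧ ∀ J ∈ C, (minElt C).card ≤ J.card := by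
  rw [minElt, dif_pos h]
  obtain ⟨h1, h2⟩ := (C.exists_min_image Finset.card h).choose_spec
  exact ⟨h1, h2⟩

lemma minElt_subset {C : Finset (Finset ℕ)} (h : C.Nonempty)
    (hC : ∀ I ∈ C, ∀ J ∈ C, I ⊆ J ∨ J ⊆ I) : ∀ J ∈ C, minElt C ⊆ J := by
  intro J hJ
  obtain ⟨hm, hmin⟩ := minElt_spec h
  rcases hC _ hm _ hJ with h' | h'
  · exact h'
  · have e := Finset.eq_of_subset_of_card_le h' (hmin J hJ)
    rw [← e]

lemma iChains_decomp (A B : Finset ℕ) (F : Finset (Finset ℕ) → R) :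
    ∑ C ∈ iChains A B, F C =
      F ∅ + ∑ J ∈ between A B, ∑ C ∈ iChains J B, F (insert J C) := by
  rw [← Finset.add_sum_erase _ F (empty_mem_iChains A B)]
  congr 1
  have hstep : ∑ C ∈ (iChains A B).erase ∅, F C
      = ∑ p ∈ (between A B).sigma (fun J => iChains J B), F (insert p.1 p.2) := by
    refine Finset.sum_bij'
      (fun C _ => (⟨minElt C, C.erase (minElt C)⟩ : Σ _ : Finset ℕ, Finset (Finset ℕ)))
      (fun p _ => insert p.1 p.2) ?_ ?_ ?_ ?_ ?_
    · -- hi : image of erase set lands in sigma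
      intro C hC
      have hCne : C.Nonempty := nonempty_iff_ne_empty.2 (ne_of_mem_erase hC)
      have hCch := mem_iChains.1 (mem_of_mem_erase hC)
      have hmem := (minElt_spec hCne).1
      have hmin := minElt_subset hCne hCch.2
      simp only [Finset.mem_sigma]
      constructor
      · exact hCch.1 hmem
      · rw [mem_iChains]
        constructor
        · intro I hI
          have hIC := mem_of_mem_erase hI
          have hIb := mem_between.1 (hCch.1 hIC)
          rw [mem_between]
          refine ⟨?_, hIb.2⟩
          exact (Finset.ssubset_iff_subset_ne).2 ⟨hmin I hIC, Ne.symm (ne_of_mem_erase hI)⟩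
        · intro I hI J hJ
          exact hCch.2 I (mem_of_mem_erase hI) J (mem_of_mem_erase hJ)
    · -- hj : insert lands in erase set
      rintro ⟨J, C⟩ hp
      simp only [Finset.mem_sigma] at hp
      obtain ⟨hJb, hCch⟩ := hp
      have hCm := mem_iChains.1 hCch
      have hJlt : ∀ I ∈ C, J ⊂ I := fun I hI => (mem_between.1 (hCm.1 hI)).1
      rw [Finset.mem_erase]
      constructor
      · exact (Finset.insert_nonempty _ _).ne_empty
      · rw [mem_iChains]
        constructor
        · intro I hI
          rcases Finset.mem_insert.1 hI with rfl | hIC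
          · exact hJb
          · have hIb := mem_between.1 (hCm.1 hIC)
            exact mem_between.2 ⟨(mem_between.1 hJb).1.trans (hJlt I hIC), hIb.2⟩
        · intro I hI K hK
          rcases Finset.mem_insert.1 hI with rfl | hIC <;>
            rcases Finset.mem_insert.1 hK with rfl | hKC
          · exact Or.inl (Finset.Subset.refl _)
          · exact Or.inl (hJlt K hKC).subset
          · exact Or.inr (hJlt I hIC).subset
          · exact hCm.2 I hIC K hKC
    · -- left_inv
      intro C hC
      have hCne : C.Nonempty := nonempty_iff_ne_empty.2 (ne_of_mem_erase hC)
      exact Finset.insert_erase (minElt_spec hCne).1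
    · -- right_inv
      rintro ⟨J, C⟩ hp
      simp only [Finset.mem_sigma] at hp
      obtain ⟨hJb, hCch⟩ := hp
      have hCm := mem_iChains.1 hCch
      have hJlt : ∀ I ∈ C, J ⊂ I := fun I hI => (mem_between.1 (hCm.1 hI)).1
      have hJnotin : J ∉ C := fun hJC => (hJlt J hJC).ne rfl
      have hne : (insert J C).Nonempty := Finset.insert_nonempty _ _
      have hmin : minElt (insert J C) = J := by
        obtain ⟨hm, hcard⟩ := minElt_spec hne
        rcases Finset.mem_insert.1 hm with e | hmC
        · exact e
        · exfalso
          have h1 := Finset.card_lt_card (hJlt _ hmC)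
          have h2 := hcard J (Finset.mem_insert_self J C)
          omega
      simp only [hmin, Finset.erase_insert hJnotin]
    · -- values
      intro C hC
      have hCne : C.Nonempty := nonempty_iff_ne_empty.2 (ne_of_mem_erase hC)
      exact (congrArg F (Finset.insert_erase (minElt_spec hCne).1)).symm
  rw [hstep]
  exact Finset.sum_sigma _ _ _

lemma chain_sum_rec (x : Finset ℕ → R) (A B : Finset ℕ) :
    ∑ C ∈ iChains A B, ∏ I ∈ C, x I =
      1 + ∑ J ∈ between A B, x J * ∑ C ∈ iChains J B, ∏ I ∈ C, x I := by
  rw [iChains_decomp A B fun C => ∏ I ∈ C, x I, Finset.prod_empty]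
  congr 1
  refine Finset.sum_congr rfl fun J hJ => ?_
  rw [Finset.mul_sum]
  refine Finset.sum_congr rfl fun C hC => ?_
  refine Finset.prod_insert ?_
  intro hJC
  exact ((mem_between.1 ((mem_iChains.1 hC).1 hJC)).1.ne rfl)

lemma sum_pow_neg_one {S : Finset ℕ} (hS : S.Nonempty) :
    ∑ K ∈ S.powerset, (-1 : R) ^ K.card = 0 := by
  have h := Finset.sum_powerset_neg_one_pow_card_of_nonempty hS
  have : ((∑ K ∈ S.powerset, (-1 : ℤ) ^ K.card : ℤ) : R)
      = ∑ K ∈ S.powerset, (-1 : R) ^ K.card := by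
    push_cast
    rfl
  rw [← this, h, Int.cast_zero]


lemma sdiff_card_eq {A J B : Finset ℕ} (hA : A ⊆ J) (hJ : J ⊆ B) :
    B \ J = (B \ A) \ (J \ A) := by
  ext a
  simp only [Finset.mem_sdiff]
  constructor
  · rintro ⟨haB, haJ⟩
    exact ⟨⟨haB, fun haA => haJ (hA haA)⟩, fun hc => haJ hc.1⟩
  · rintro ⟨⟨haB, haA⟩, hc⟩
    exact ⟨haB, fun haJ => hc ⟨haJ, haA⟩⟩

lemma alt_sum {A B : Finset ℕ} (hAB : A ⊂ B) :
    ∑ J ∈ between A B, (-1 : R) ^ (B \ J).card = -(-1) ^ (B \ A).card - 1 := by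
  set S := B \ A with hSdef
  have hSne : S.Nonempty := Finset.sdiff_nonempty.2 (hAB.not_subset)
  set n := S.card with hndef
  -- reindex
  have hre : ∑ J ∈ between A B, (-1 : R) ^ (B \ J).card
      = ∑ K ∈ S.powerset.filter (fun K => K ≠ ∅ ∧ K ≠ S), (-1 : R) ^ (n - K.card) := by
    refine Finset.sum_nbij' (fun J => J \ A) (fun K => A ∪ K) ?_ ?_ ?_ ?_ ?_
    · intro J hJ
      obtain ⟨h1, h2⟩ := mem_between.1 hJ
      simp only [Finset.mem_filter, Finset.mem_powerset]
      refine ⟨Finset.sdiff_subset_sdiff h2.subset (Finset.Subset.refl A), ?_, ?_⟩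
      · rw [← Finset.nonempty_iff_ne_empty]
        exact Finset.sdiff_nonempty.2 (h1.not_subset)
      · intro e
        apply h2.ne
        have e1 : A ∪ (J \ A) = J := Finset.union_sdiff_of_subset h1.subset
        have e2 : A ∪ S = B := Finset.union_sdiff_of_subset (h1.subset.trans h2.subset)
        rw [← e1, e, hSdef, e2]
    · intro K hK
      simp only [Finset.mem_filter, Finset.mem_powerset] at hK
      obtain ⟨hKS, hKne, hKnS⟩ := hK
      have hdisj : Disjoint A K := by
        rw [Finset.disjoint_right]
        intro a haK
        exact (Finset.mem_sdiff.1 (hKS haK)).2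
      have hcancel : (A ∪ K) \ A = K := by
        rw [Finset.union_sdiff_cancel_left hdisj]
      rw [mem_between]
      constructor
      · rw [Finset.ssubset_iff_subset_ne]
        refine ⟨Finset.subset_union_left, ?_⟩
        intro e
        apply hKne
        have e' : A = A ∪ K := e
        rw [← hcancel, ← e', Finset.sdiff_self]
      · rw [Finset.ssubset_iff_subset_ne]
        constructor
        · exact Finset.union_subset hAB.subset (hKS.trans Finset.sdiff_subset)
        · intro e
          apply hKnS
          have e' : A ∪ K = B := e
          rw [← hcancel, e', hSdef]
    · intro J hJ
      exact Finset.union_sdiff_of_subset (mem_between.1 hJ).1.subset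
    · intro K hK
      simp only [Finset.mem_filter, Finset.mem_powerset] at hK
      have hdisj : Disjoint A K := by
        rw [Finset.disjoint_right]
        intro a haK
        exact (Finset.mem_sdiff.1 (hK.1 haK)).2
      show (A ∪ K) \ A = K
      rw [Finset.union_sdiff_cancel_left hdisj]
    · intro J hJ
      obtain ⟨h1, h2⟩ := mem_between.1 hJ
      show (-1 : R) ^ (B \ J).card = (-1) ^ (n - (J \ A).card)
      have hsd : B \ J = S \ (J \ A) := sdiff_card_eq h1.subset h2.subset
      rw [hsd, Finset.card_sdiff_of_subset (Finset.sdiff_subset_sdiff h2.subset (Finset.Subset.refl A))]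
  -- evaluate the reindexed sum
  rw [hre]
  have hfact : ∀ K ∈ S.powerset.filter (fun K => K ≠ ∅ ∧ K ≠ S),
      (-1 : R) ^ (n - K.card) = (-1) ^ n * (-1) ^ K.card := by
    intro K hK
    simp only [Finset.mem_filter, Finset.mem_powerset] at hK
    have hc : K.card ≤ n := Finset.card_le_card hK.1
    have h2 : (-1 : R) ^ K.card * (-1) ^ K.card = 1 := by
      rw [← mul_pow]
      norm_num
    calc (-1 : R) ^ (n - K.card)
        = (-1) ^ (n - K.card) * ((-1) ^ K.card * (-1) ^ K.card) := by rw [h2, mul_one]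
      _ = ((-1) ^ (n - K.card) * (-1) ^ K.card) * (-1) ^ K.card := by ring
      _ = (-1) ^ n * (-1) ^ K.card := by rw [← pow_add, Nat.sub_add_cancel hc]
  rw [Finset.sum_congr rfl hfact, ← Finset.mul_sum]
  have hfeq : S.powerset.filter (fun K => K ≠ ∅ ∧ K ≠ S) = (S.powerset.erase ∅).erase S := by
    ext K
    simp only [Finset.mem_filter, Finset.mem_powerset, Finset.mem_erase]
    tauto
  have h0 : (∅ : Finset ℕ) ∈ S.powerset := Finset.empty_mem_powerset S
  have hSm : S ∈ S.powerset.erase ∅ :=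
    Finset.mem_erase.2 ⟨hSne.ne_empty, Finset.mem_powerset_self S⟩
  have e1 := Finset.add_sum_erase S.powerset (fun K => (-1 : R) ^ K.card) h0
  have e2 := Finset.add_sum_erase (S.powerset.erase ∅) (fun K => (-1 : R) ^ K.card) hSm
  have e3 : ∑ K ∈ S.powerset, (-1 : R) ^ K.card = 0 := sum_pow_neg_one hSne
  have hsq : (-1 : R) ^ n * (-1) ^ n = 1 := by
    rw [← mul_pow]
    norm_num
  simp only [Finset.card_empty, pow_zero] at e1
  rw [hfeq]
  have e4 : ∑ K ∈ (S.powerset.erase ∅).erase S, (-1 : R) ^ K.card = -1 - (-1) ^ n := by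
    rw [e3] at e1
    linear_combination e1 + e2
  rw [e4]
  linear_combination (-1 : R) * hsq

lemma card_lt_of_between {A B J : Finset ℕ} (hJ : J ∈ between A B) :
    (B \ J).card < (B \ A).card := by
  obtain ⟨h1, h2⟩ := mem_between.1 hJ
  apply Finset.card_lt_card
  rw [Finset.ssubset_iff_of_subset (Finset.sdiff_subset_sdiff (Finset.Subset.refl B) h1.subset)]
  obtain ⟨a, haJ, haA⟩ := Finset.exists_of_ssubset h1
  refine ⟨a, ?_, ?_⟩
  · exact Finset.mem_sdiff.2 ⟨h2.subset haJ, haA⟩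
  · simp only [Finset.mem_sdiff, not_and, not_not]
    intro _
    exact haJ

lemma card_sdiff_add' {J K B : Finset ℕ} (h1 : J ⊆ K) (h2 : K ⊆ B) :
    (B \ J).card = (B \ K).card + (K \ J).card := by
  have c1 := Finset.card_le_card h1
  have c2 := Finset.card_le_card h2
  rw [Finset.card_sdiff_of_subset h1, Finset.card_sdiff_of_subset h2, Finset.card_sdiff_of_subset (h1.trans h2)]
  omega

lemma between_trans₁ {A B J : Finset ℕ} (hJ : J ∈ between A B) :
    between J B = (between A B).filter fun K => J ⊂ K := by
  ext K
  simp only [mem_between, Finset.mem_filter]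
  exact ⟨fun h => ⟨⟨(mem_between.1 hJ).1.trans h.1, h.2⟩, h.1⟩, fun h => ⟨h.2, h.1.2⟩⟩

lemma between_trans₂ {A B K : Finset ℕ} (hK : K ∈ between A B) :
    between A K = (between A B).filter fun J => J ⊂ K := by
  ext J
  simp only [mem_between, Finset.mem_filter]
  exact ⟨fun h => ⟨⟨h.1, h.2.trans (mem_between.1 hK).2⟩, h.2⟩, fun h => ⟨h.1.1, h.2⟩⟩

lemma between_swap (A B : Finset ℕ) (g : Finset ℕ → Finset ℕ → R) :
    ∑ J ∈ between A B, ∑ K ∈ between J B, g J K =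
      ∑ K ∈ between A B, ∑ J ∈ between A K, g J K := by
  calc ∑ J ∈ between A B, ∑ K ∈ between J B, g J K
      = ∑ J ∈ between A B, ∑ K ∈ between A B, if J ⊂ K then g J K else 0 := by
        refine Finset.sum_congr rfl fun J hJ => ?_
        rw [between_trans₁ hJ, Finset.sum_filter]
    _ = ∑ K ∈ between A B, ∑ J ∈ between A B, if J ⊂ K then g J K else 0 := Finset.sum_comm
    _ = ∑ K ∈ between A B, ∑ J ∈ between A K, g J K := by
        refine Finset.sum_congr rfl fun K hK => ?_
        rw [between_trans₂ hK, Finset.sum_filter]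

lemma bterm (x : Finset ℕ → R) {A B : Finset ℕ} (hAB : A ⊂ B) :
    ∑ J ∈ between A B, (-1 : R) ^ (B \ J).card * ∑ C ∈ iChains J B, ∏ I ∈ C, x I
      = -(-1) ^ (B \ A).card - 1
        - ∑ K ∈ between A B,
            ((-1) ^ (B \ A).card + (-1) ^ (B \ K).card)
              * (x K * ∑ C ∈ iChains K B, ∏ I ∈ C, x I) := by
  have step1 : ∑ J ∈ between A B, (-1 : R) ^ (B \ J).card * ∑ C ∈ iChains J B, ∏ I ∈ C, x I
      = ∑ J ∈ between A B, ((-1 : R) ^ (B \ J).card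
          + ∑ K ∈ between J B, (-1 : R) ^ (B \ J).card
              * (x K * ∑ C ∈ iChains K B, ∏ I ∈ C, x I)) := by
    refine Finset.sum_congr rfl fun J _ => ?_
    rw [chain_sum_rec x J B, mul_add, mul_one, Finset.mul_sum]
  rw [step1, Finset.sum_add_distrib, alt_sum hAB,
    between_swap A B (fun J K => (-1 : R) ^ (B \ J).card
      * (x K * ∑ C ∈ iChains K B, ∏ I ∈ C, x I))]
  have step2 : ∀ K ∈ between A B,
      ∑ J ∈ between A K, (-1 : R) ^ (B \ J).card
          * (x K * ∑ C ∈ iChains K B, ∏ I ∈ C, x I)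
        = -(((-1) ^ (B \ A).card + (-1) ^ (B \ K).card)
            * (x K * ∑ C ∈ iChains K B, ∏ I ∈ C, x I)) := by
    intro K hK
    obtain ⟨hAK, hKB⟩ := mem_between.1 hK
    rw [← Finset.sum_mul]
    have inner : ∑ J ∈ between A K, (-1 : R) ^ (B \ J).card
        = -((-1) ^ (B \ A).card + (-1) ^ (B \ K).card) := by
      have e1 : ∀ J ∈ between A K,
          (-1 : R) ^ (B \ J).card = (-1) ^ (B \ K).card * (-1) ^ (K \ J).card := by
        intro J hJ
        obtain ⟨_, hJK⟩ := mem_between.1 hJ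
        rw [← pow_add, ← card_sdiff_add' hJK.subset hKB.subset]
      rw [Finset.sum_congr rfl e1, ← Finset.mul_sum, alt_sum hAK]
      have e2 : (-1 : R) ^ (B \ K).card * (-1) ^ (K \ A).card = (-1) ^ (B \ A).card := by
        rw [← pow_add, ← card_sdiff_add' hAK.subset hKB.subset]
      linear_combination (-1 : R) * e2
    rw [inner]
    ring
  rw [Finset.sum_congr rfl step2, Finset.sum_neg_distrib]
  ring

lemma chains_funEq (x : Finset ℕ → R) :
    ∀ (n : ℕ) (A B : Finset ℕ), A ⊂ B → (B \ A).card = n →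
      ∑ C ∈ iChains A B, ∏ I ∈ C, -(1 + x I)
        = (-1) ^ (n + 1) * ∑ C ∈ iChains A B, ∏ I ∈ C, x I := by
  intro n
  induction n using Nat.strong_induction_on with
  | _ n IH =>
    intro A B hAB hn
    rw [chain_sum_rec (fun I => -(1 + x I)) A B, chain_sum_rec x A B]
    have step1 : ∑ J ∈ between A B, -(1 + x J) * ∑ C ∈ iChains J B, ∏ I ∈ C, -(1 + x I)
        = ∑ J ∈ between A B, ((-1 : R) ^ (B \ J).card * ∑ C ∈ iChains J B, ∏ I ∈ C, x I
            + (-1) ^ (B \ J).card * (x J * ∑ C ∈ iChains J B, ∏ I ∈ C, x I)) := by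
      refine Finset.sum_congr rfl fun J hJm => ?_
      have hIH := IH (B \ J).card (hn ▸ card_lt_of_between hJm) J B (mem_between.1 hJm).2 rfl
      rw [hIH, pow_succ]
      ring
    rw [step1, Finset.sum_add_distrib, bterm x hAB, hn]
    have step2 : ∑ K ∈ between A B,
        ((-1 : R) ^ n + (-1) ^ (B \ K).card) * (x K * ∑ C ∈ iChains K B, ∏ I ∈ C, x I)
          = (-1) ^ n * ∑ K ∈ between A B, x K * ∑ C ∈ iChains K B, ∏ I ∈ C, x I
            + ∑ K ∈ between A B, (-1) ^ (B \ K).card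
                * (x K * ∑ C ∈ iChains K B, ∏ I ∈ C, x I) := by
      rw [Finset.mul_sum, ← Finset.sum_add_distrib]
      refine Finset.sum_congr rfl fun K _ => ?_
      ring
    rw [step2, pow_succ]
    ring

end ChainAux


open Finset in
lemma chainsOn_eq (h : ℕ) : chainsOn h = iChains ∅ (Finset.Icc 1 h) := by
  have hset : (Finset.Icc 1 h).powerset.filter (fun I => I ≠ ∅ ∧ I ≠ Finset.Icc 1 h)
      = between ∅ (Finset.Icc 1 h) := by
    ext I
    simp only [between, Finset.mem_filter, Finset.mem_powerset]
    constructor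
    · rintro ⟨h1, h2, h3⟩
      refine ⟨h1, ?_, ?_⟩
      · exact Finset.empty_ssubset.2 (Finset.nonempty_iff_ne_empty.2 h2)
      · exact Finset.ssubset_iff_subset_ne.2 ⟨h1, h3⟩
    · rintro ⟨h1, h2, h3⟩
      exact ⟨h1, Finset.nonempty_iff_ne_empty.1 (Finset.empty_ssubset.1 h2), h3.ne⟩
  rw [chainsOn, iChains, hset]

/-- Functional equation for the generalized Igusa function:
`I^wo_h((X_𝓘⁻¹)_𝓘) = (-1)^h · X_{{1,…,h}} · I^wo_h((X_𝓘)_𝓘)` in the field of rational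
functions over `ℚ` in the variables `X_𝓘`. -/
theorem igusaWO_funEq (h : ℕ) (hh : 0 < h) :
    igusaWO h (fun I : Finset ℕ =>
        (algebraMap (MvPolynomial (Finset ℕ) ℚ) (FractionRing (MvPolynomial (Finset ℕ) ℚ))
          (MvPolynomial.X I))⁻¹) =
      (-1) ^ h *
        algebraMap (MvPolynomial (Finset ℕ) ℚ) (FractionRing (MvPolynomial (Finset ℕ) ℚ))
          (MvPolynomial.X (Finset.Icc 1 h)) *
        igusaWO h (fun I : Finset ℕ =>
          algebraMap (MvPolynomial (Finset ℕ) ℚ) (FractionRing (MvPolynomial (Finset ℕ) ℚ))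
            (MvPolynomial.X I)) := by
    classical
  set φ := algebraMap (MvPolynomial (Finset ℕ) ℚ) (FractionRing (MvPolynomial (Finset ℕ) ℚ))
    with hφ
  have hinj : Function.Injective φ := IsFractionRing.injective _ _
  have hX : ∀ I : Finset ℕ, φ (MvPolynomial.X I) ≠ 0 := by
    intro I
    rw [ne_eq, _root_.map_eq_zero_iff φ hinj]
    exact MvPolynomial.X_ne_zero I
  have h1X : ∀ I : Finset ℕ,
      (1 : FractionRing (MvPolynomial (Finset ℕ) ℚ)) - φ (MvPolynomial.X I) ≠ 0 := by
    intro I he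
    rw [sub_eq_zero] at he
    have h1 : φ 1 = φ (MvPolynomial.X I) := by rw [map_one]; exact he
    have hX1 : (1 : MvPolynomial (Finset ℕ) ℚ) = MvPolynomial.X I := hinj h1
    have h2 := congrArg (MvPolynomial.coeff 0) hX1
    simp [MvPolynomial.coeff_zero_X] at h2
  have hiX : ∀ I : Finset ℕ,
      (1 : FractionRing (MvPolynomial (Finset ℕ) ℚ)) - (φ (MvPolynomial.X I))⁻¹ ≠ 0 := by
    intro I he
    rw [sub_eq_zero] at he
    apply h1X I
    rw [sub_eq_zero, ← inv_inv (φ (MvPolynomial.X I)), ← he, inv_one]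
  set S := Finset.Icc 1 h with hS
  have hSne : S.Nonempty := Finset.nonempty_Icc.2 hh
  have hemp : (∅ : Finset ℕ) ⊂ S := Finset.empty_ssubset.2 hSne
  have hcard : (S \ ∅).card = h := by
    rw [Finset.sdiff_empty, hS, Nat.card_Icc]
    omega
  have hterm : ∀ I : Finset ℕ,
      (φ (MvPolynomial.X I))⁻¹ / (1 - (φ (MvPolynomial.X I))⁻¹)
        = -(1 + φ (MvPolynomial.X I) / (1 - φ (MvPolynomial.X I))) := by
    intro I
    have h1 := hX I
    have h2 := h1X I
    have h3 := hiX I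
    have h2' : (-1 : FractionRing (MvPolynomial (Finset ℕ) ℚ)) + φ (MvPolynomial.X I) ≠ 0 :=
      fun e => h2 (by linear_combination -e)
    field_simp
    linear_combination (-1 : FractionRing (MvPolynomial (Finset ℕ) ℚ)) * mul_inv_cancel₀ h2'
  have hfull : (1 - (φ (MvPolynomial.X S))⁻¹)⁻¹
      = -(φ (MvPolynomial.X S)) * (1 - φ (MvPolynomial.X S))⁻¹ := by
    have h1 := hX S
    have h2 := h1X S
    have h3 := hiX S
    have h2' : (-1 : FractionRing (MvPolynomial (Finset ℕ) ℚ)) + φ (MvPolynomial.X S) ≠ 0 :=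
      fun e => h2 (by linear_combination -e)
    field_simp
    linear_combination (-1 : FractionRing (MvPolynomial (Finset ℕ) ℚ)) * mul_inv_cancel₀ h2'
  simp only [igusaWO, chainsOn_eq h, ← hS]
  have hsum : ∑ C ∈ iChains ∅ S, ∏ I ∈ C,
        (φ (MvPolynomial.X I))⁻¹ / (1 - (φ (MvPolynomial.X I))⁻¹)
      = (-1) ^ (h + 1) * ∑ C ∈ iChains ∅ S, ∏ I ∈ C,
          φ (MvPolynomial.X I) / (1 - φ (MvPolynomial.X I)) := by
    rw [Finset.sum_congr rfl fun C _ => Finset.prod_congr rfl fun I _ => hterm I]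
    exact chains_funEq (fun I => φ (MvPolynomial.X I) / (1 - φ (MvPolynomial.X I)))
      h ∅ S hemp hcard
  rw [hsum, hfull, pow_succ]
  ring
end
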